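/- arXiv:1302.2531 — 4 statements merged into one kernel-verified Lean document; each statement's English description precedes it below -/
import Mathlib

section
/- Let M be an n×n real matrix all of whose eigenvalues have strictly positive real part. Then the integral C = ∫₀^∞ e^{-Ms} e^{-M*s} ds converges (where M* is the transpose of M), and C is a symmetric positive definite matrix. -/
open MeasureTheory Matrix Set NormedSpace

attribute [local instance] Matrix.linftyOpNormedAddCommGroup Matrix.linftyOpNormedSpace
  Matrix.linftyOpNormedRing Matrix.linftyOpNormedAlgebra

namespace Stmt0Aux


variable {E F : Type*} [NormedAddCommGroup E] [NormedAddCommGroup F]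

/-- Exponential decay on `[0, ∞)`. -/
def Decay (f : ℝ → E) : Prop :=
  ∃ C δ : ℝ, 0 < δ ∧ ∀ s : ℝ, 0 ≤ s → ‖f s‖ ≤ C * Real.exp (-δ * s)

theorem Decay.zero : Decay (fun _ : ℝ => (0 : E)) :=
  ⟨0, 1, one_pos, by simp⟩

theorem Decay.of_le {f : ℝ → E} {g : ℝ → F} (hg : Decay g)
    (h : ∀ s : ℝ, 0 ≤ s → ‖f s‖ ≤ ‖g s‖) : Decay f := by
  obtain ⟨C, δ, hδ, hC⟩ := hg
  exact ⟨C, δ, hδ, fun s hs => (h s hs).trans (hC s hs)⟩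

theorem Decay.add {f g : ℝ → E} (hf : Decay f) (hg : Decay g) :
    Decay (fun s => f s + g s) := by
  obtain ⟨C₁, δ₁, hδ₁, h₁⟩ := hf
  obtain ⟨C₂, δ₂, hδ₂, h₂⟩ := hg
  refine ⟨|C₁| + |C₂|, min δ₁ δ₂, lt_min hδ₁ hδ₂, fun s hs => ?_⟩
  have e₁ : Real.exp (-δ₁ * s) ≤ Real.exp (-(min δ₁ δ₂) * s) :=
    Real.exp_le_exp.2 (by nlinarith [min_le_left δ₁ δ₂])
  have e₂ : Real.exp (-δ₂ * s) ≤ Real.exp (-(min δ₁ δ₂) * s) :=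
    Real.exp_le_exp.2 (by nlinarith [min_le_right δ₁ δ₂])
  calc ‖f s + g s‖ ≤ ‖f s‖ + ‖g s‖ := norm_add_le _ _
    _ ≤ C₁ * Real.exp (-δ₁ * s) + C₂ * Real.exp (-δ₂ * s) := add_le_add (h₁ s hs) (h₂ s hs)
    _ ≤ |C₁| * Real.exp (-(min δ₁ δ₂) * s) + |C₂| * Real.exp (-(min δ₁ δ₂) * s) := by
        have := Real.exp_pos (-δ₁ * s)
        have := Real.exp_pos (-δ₂ * s)
        gcongr <;> [exact le_abs_self C₁; exact le_abs_self C₂]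
    _ = (|C₁| + |C₂|) * Real.exp (-(min δ₁ δ₂) * s) := by ring

theorem Decay.sum {ι : Type*} (t : Finset ι) (f : ι → ℝ → E)
    (h : ∀ i ∈ t, Decay (f i)) : Decay (fun s => ∑ i ∈ t, f i s) := by
  classical
  induction t using Finset.induction_on with
  | empty => simpa using Decay.zero
  | insert a t' hx ih =>
    simp only [Finset.sum_insert hx]
    exact (h a (Finset.mem_insert_self a t')).add
      (ih fun i hi => h i (Finset.mem_insert_of_mem hi))

theorem pow_le_factorial_mul_exp (j : ℕ) {x : ℝ} (hx : 0 ≤ x) :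
    x ^ j ≤ j.factorial * Real.exp x := by
  have h1 : x ^ j / j.factorial ≤ ∑ i ∈ Finset.range (j + 1), x ^ i / i.factorial :=
    Finset.single_le_sum (f := fun i => x ^ i / i.factorial)
      (fun i _ => by positivity) (Finset.self_mem_range_succ j)
  have h2 := Real.sum_le_exp_of_nonneg hx (j + 1)
  have hj : (0:ℝ) < j.factorial := by exact_mod_cast j.factorial_pos
  have h3 := h1.trans h2
  rw [div_le_iff₀ hj] at h3
  linarith [h3]

/-- The basic decay bound: `s ^ j * exp (-a * s)` decays exponentially for `a > 0`. -/
theorem decay_pow_mul_exp [NormedSpace ℝ E] (j : ℕ) {a : ℝ} (ha : 0 < a) (w : E) :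
    Decay (fun s : ℝ => (s ^ j * Real.exp (-a * s)) • w) := by
  refine ⟨j.factorial * (2 / a) ^ j * ‖w‖, a / 2, by positivity, fun s hs => ?_⟩
  have key : s ^ j * Real.exp (-a * s) ≤ j.factorial * (2 / a) ^ j * Real.exp (-(a / 2) * s) := by
    have h1 : (a / 2 * s) ^ j ≤ j.factorial * Real.exp (a / 2 * s) :=
      pow_le_factorial_mul_exp j (by positivity)
    have h2 : s ^ j = (a / 2 * s) ^ j * (2 / a) ^ j := by
      rw [← mul_pow]; congr 1; field_simp
    have h3 : Real.exp (a / 2 * s) * Real.exp (-a * s) = Real.exp (-(a / 2) * s) := by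
      rw [← Real.exp_add]; ring_nf
    have hexp := (Real.exp_pos (-a * s)).le
    calc s ^ j * Real.exp (-a * s) = (a / 2 * s) ^ j * (2 / a) ^ j * Real.exp (-a * s) := by
          rw [← h2]
      _ ≤ j.factorial * Real.exp (a / 2 * s) * (2 / a) ^ j * Real.exp (-a * s) := by
          have : (0:ℝ) ≤ (2 / a) ^ j := by positivity
          nlinarith [mul_le_mul_of_nonneg_right h1 (mul_nonneg this hexp)]
      _ = j.factorial * (2 / a) ^ j * (Real.exp (a / 2 * s) * Real.exp (-a * s)) := by ring
      _ = j.factorial * (2 / a) ^ j * Real.exp (-(a / 2) * s) := by rw [h3]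
  have hnn : 0 ≤ s ^ j * Real.exp (-a * s) := by positivity
  rw [norm_smul, Real.norm_eq_abs, abs_of_nonneg hnn]
  calc s ^ j * Real.exp (-a * s) * ‖w‖
      ≤ j.factorial * (2 / a) ^ j * Real.exp (-(a / 2) * s) * ‖w‖ := by
        gcongr
    _ = j.factorial * (2 / a) ^ j * ‖w‖ * Real.exp (-(a / 2) * s) := by ring


variable {n : ℕ}



/-- `B ↦ B *ᵥ v` as a continuous linear map. -/
noncomputable def mulVecCLM (v : Fin n → ℂ) :
    Matrix (Fin n) (Fin n) ℂ →L[ℂ] (Fin n → ℂ) :=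
  LinearMap.toContinuousLinearMap
    { toFun := fun B => B *ᵥ v
      map_add' := fun B C => Matrix.add_mulVec B C v
      map_smul' := fun c B => by simp [Matrix.smul_mulVec] }

@[simp] theorem mulVecCLM_apply (v : Fin n → ℂ) (B : Matrix (Fin n) (Fin n) ℂ) :
    mulVecCLM v B = B *ᵥ v := rfl

theorem exp_mulVec_eq (B : Matrix (Fin n) (Fin n) ℂ) (v : Fin n → ℂ) (k : ℕ)
    (h : B ^ k *ᵥ v = 0) :
    exp B *ᵥ v = ∑ j ∈ Finset.range k, ((j.factorial : ℂ)⁻¹) • (B ^ j *ᵥ v) := by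
  have hsum : Summable fun j : ℕ => ((j.factorial : ℂ)⁻¹) • B ^ j :=
    expSeries_summable' (𝕂 := ℂ) B
  have h0 : exp B = ∑' j : ℕ, ((j.factorial : ℂ)⁻¹) • B ^ j := by
    rw [exp_eq_tsum ℂ]
  have h1 : exp B *ᵥ v = ∑' j : ℕ, ((j.factorial : ℂ)⁻¹) • (B ^ j *ᵥ v) := by
    have := (mulVecCLM v).map_tsum hsum
    simpa [h0] using this
  rw [h1]
  refine tsum_eq_sum fun j hj => ?_
  have hjk : k ≤ j := le_of_not_gt fun hc => hj (Finset.mem_range.mpr hc)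
  have : B ^ j *ᵥ v = 0 := by
    have hp : B ^ j = B ^ (j - k) * B ^ k := by
      rw [← pow_add]; congr 1; omega
    rw [hp, ← Matrix.mulVec_mulVec, h, Matrix.mulVec_zero]
  simp [this]


theorem real_smul_matrix (r : ℝ) (X : Matrix (Fin n) (Fin n) ℂ) :
    r • X = (r : ℂ) • X := by
  ext i j; simp [Complex.real_smul]

theorem smul_one_exp (c : ℂ) :
    exp (c • (1 : Matrix (Fin n) (Fin n) ℂ)) = Complex.exp c • 1 := by
  rw [Matrix.smul_one_eq_diagonal, exp_diagonal, Matrix.smul_one_eq_diagonal]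
  rw [Pi.exp_def]
  funext i
  rw [Complex.exp_eq_exp_ℂ]


theorem decay_genEig (A : Matrix (Fin n) (Fin n) ℂ) {μ : ℂ} (hμ : 0 < μ.re)
    (v : Fin n → ℂ) (k : ℕ) (h : (A - μ • 1) ^ k *ᵥ v = 0) :
    Decay (fun s : ℝ => exp (-s • A) *ᵥ v) := by
  set N : Matrix (Fin n) (Fin n) ℂ := A - μ • 1 with hN
  have key : ∀ s : ℝ, exp (-s • A) *ᵥ v =
      ∑ j ∈ Finset.range k,
        (Complex.exp ((-s : ℂ) * μ) * (j.factorial : ℂ)⁻¹ * (-s : ℂ) ^ j) • (N ^ j *ᵥ v) := by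
    intro s
    have hsplit : (-s : ℝ) • A = ((-s : ℂ) * μ) • (1 : Matrix (Fin n) (Fin n) ℂ)
        + (-s : ℂ) • N := by
      rw [real_smul_matrix]
      push_cast
      rw [hN]
      module
    have hcomm : Commute (((-s : ℂ) * μ) • (1 : Matrix (Fin n) (Fin n) ℂ)) ((-s : ℂ) • N) :=
      ((Commute.one_left N).smul_left _).smul_right _
    have hBk : ((-s : ℂ) • N) ^ k *ᵥ v = 0 := by
      rw [smul_pow, Matrix.smul_mulVec, h, smul_zero]
    calc exp (-s • A) *ᵥ v
        = (exp (((-s : ℂ) * μ) • (1 : Matrix (Fin n) (Fin n) ℂ))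
            * exp ((-s : ℂ) • N)) *ᵥ v := by
          rw [hsplit]; exact congrArg (· *ᵥ v) (exp_add_of_commute hcomm)
      _ = Complex.exp ((-s : ℂ) * μ) • (exp ((-s : ℂ) • N) *ᵥ v) := by
          rw [smul_one_exp, smul_mul_assoc, one_mul, Matrix.smul_mulVec]
      _ = Complex.exp ((-s : ℂ) * μ) •
            ∑ j ∈ Finset.range k, ((j.factorial : ℂ)⁻¹) • (((-s : ℂ) • N) ^ j *ᵥ v) := by
          rw [exp_mulVec_eq _ _ _ hBk]
      _ = ∑ j ∈ Finset.range k,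
            (Complex.exp ((-s : ℂ) * μ) * (j.factorial : ℂ)⁻¹ * (-s : ℂ) ^ j) • (N ^ j *ᵥ v) := by
          rw [Finset.smul_sum]
          refine Finset.sum_congr rfl fun j _ => ?_
          rw [smul_pow, Matrix.smul_mulVec, smul_smul, smul_smul, mul_assoc]
  have : Decay (fun s : ℝ => ∑ j ∈ Finset.range k,
      (Complex.exp ((-s : ℂ) * μ) * (j.factorial : ℂ)⁻¹ * (-s : ℂ) ^ j) • (N ^ j *ᵥ v)) := by
    refine Decay.sum _ _ fun j _ => ?_
    refine Decay.of_le (decay_pow_mul_exp j hμ ((j.factorial : ℝ)⁻¹ • (N ^ j *ᵥ v))) ?_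
    intro s hs
    rw [norm_smul, norm_smul, norm_smul]
    have h1 : ‖Complex.exp ((-s : ℂ) * μ)‖ = Real.exp (-μ.re * s) := by
      rw [Complex.norm_exp]
      congr 1
      simp [Complex.mul_re]
      ring
    have h2 : ‖(-s : ℂ) ^ j‖ = s ^ j := by
      rw [norm_pow]
      simp [abs_of_nonneg hs]
    have h3 : ‖((j.factorial : ℂ)⁻¹)‖ = (j.factorial : ℝ)⁻¹ := by
      rw [norm_inv]
      simp
    rw [norm_mul, norm_mul, h1, h2, h3]
    rw [Real.norm_eq_abs, Real.norm_eq_abs, abs_of_nonneg (by positivity : (0:ℝ) ≤ s ^ j * Real.exp (-μ.re * s)),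
      abs_of_nonneg (by positivity : (0:ℝ) ≤ ((j.factorial:ℝ))⁻¹)]
    apply le_of_eq
    ring
  exact Decay.of_le this fun s hs => by rw [key s]


theorem decay_mulVec (A : Matrix (Fin n) (Fin n) ℂ)
    (hA : ∀ μ ∈ spectrum ℂ A, 0 < μ.re) (v : Fin n → ℂ) :
    Decay (fun s : ℝ => exp (-s • A) *ᵥ v) := by
  classical
  set f : Module.End ℂ (Fin n → ℂ) := Matrix.toLinAlgEquiv' A with hf
  have htop := Module.End.iSup_maxGenEigenspace_eq_top f
  have hv : v ∈ ⨆ μ : ℂ, f.maxGenEigenspace μ := htop ▸ Submodule.mem_top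
  rw [Submodule.mem_iSup_iff_exists_finsupp] at hv
  obtain ⟨c, hc, hsum⟩ := hv
  have hre : (fun s : ℝ => exp (-s • A) *ᵥ v) =
      fun s => ∑ μ ∈ c.support, exp (-s • A) *ᵥ c μ := by
    funext s
    rw [← hsum, Finsupp.sum]
    exact map_sum (Matrix.mulVecLin (exp (-s • A))) _ _
  rw [hre]
  refine Decay.sum _ _ fun μ hμ => ?_
  -- `c μ` is a nonzero element of the generalized eigenspace of `μ`
  have hcμ : c μ ≠ 0 := Finsupp.mem_support_iff.mp hμ
  obtain ⟨l, -, hl⟩ := Module.End.mem_genEigenspace.mp (hc μ)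
  rw [LinearMap.mem_ker] at hl
  -- μ is in the spectrum
  have hspec : μ ∈ spectrum ℂ A := by
    have hgen : f.HasGenEigenvalue μ l := by
      rw [Module.End.hasGenEigenvalue_iff]
      intro hbot
      apply hcμ
      have : c μ ∈ f.genEigenspace μ l := Module.End.mem_genEigenspace_nat.mpr hl
      rw [hbot] at this
      simpa using this
    have heig := Module.End.hasEigenvalue_of_hasGenEigenvalue hgen
    have := Module.End.hasEigenvalue_iff_mem_spectrum.mp heig
    rwa [hf, AlgEquiv.spectrum_eq] at this
  -- translate to matrix form and apply the eigenvector decay lemma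
  have hmat : (A - μ • 1) ^ l *ᵥ c μ = 0 := by
    have : ((f - μ • 1) ^ l) (c μ) = Matrix.toLinAlgEquiv' ((A - μ • 1) ^ l) (c μ) := by
      rw [map_pow]
      congr 2
      rw [hf]
      rw [map_sub]
      congr 1
      rw [_root_.map_smul, _root_.map_one]
    rw [this, Matrix.toLinAlgEquiv'_apply] at hl
    exact hl
  exact decay_genEig A (hA μ hspec) (c μ) l hmat


/-- The `L∞`-operator norm of a matrix is at most the sum of the sup-norms of its columns. -/
theorem norm_le_sum_cols (B : Matrix (Fin n) (Fin n) ℂ) :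
    ‖B‖ ≤ ∑ j, ‖B *ᵥ Pi.single j 1‖ := by
  have key : ‖B‖₊ ≤ ∑ j, ‖B *ᵥ Pi.single j 1‖₊ := by
    rw [Matrix.linfty_opNNNorm_def]
    refine Finset.sup_le fun i _ => Finset.sum_le_sum fun j _ => ?_
    have h1 : (B *ᵥ Pi.single j 1) i = B i j := by
      rw [Matrix.mulVec_single]
      simp
    calc ‖B i j‖₊ = ‖(B *ᵥ Pi.single j 1) i‖₊ := by rw [h1]
      _ ≤ ‖B *ᵥ Pi.single j 1‖₊ := nnnorm_le_pi_nnnorm _ i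
  exact_mod_cast (NNReal.coe_le_coe.mpr key).trans_eq (by push_cast; ring)

theorem decay_exp_complex (A : Matrix (Fin n) (Fin n) ℂ)
    (hA : ∀ μ ∈ spectrum ℂ A, 0 < μ.re) :
    Decay (fun s : ℝ => exp (-s • A)) := by
  have hq : Decay (fun s : ℝ => ∑ j : Fin n, ‖exp (-s • A) *ᵥ Pi.single j 1‖) := by
    refine Decay.sum Finset.univ (fun j s => ‖exp (-s • A) *ᵥ Pi.single j (1:ℂ)‖)
      fun j _ => ?_
    exact Decay.of_le (decay_mulVec A hA (Pi.single j 1)) fun s _ => by simp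
  refine Decay.of_le hq fun s _ => ?_
  refine (norm_le_sum_cols _).trans ?_
  rw [Real.norm_eq_abs]
  exact le_abs_self _

theorem map_algebraMap_norm (B : Matrix (Fin n) (Fin n) ℝ) :
    ‖B.map (algebraMap ℝ ℂ)‖ = ‖B‖ := by
  have : ‖B.map (algebraMap ℝ ℂ)‖₊ = ‖B‖₊ := by
    rw [Matrix.linfty_opNNNorm_def, Matrix.linfty_opNNNorm_def]
    congr 1
    funext i
    refine Finset.sum_congr rfl fun j _ => ?_
    simp [Matrix.map_apply]
  exact congrArg NNReal.toReal this

theorem continuous_mapMatrix :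
    Continuous fun B : Matrix (Fin n) (Fin n) ℝ => B.map (algebraMap ℝ ℂ) := by
  exact LinearMap.continuous_of_finiteDimensional
    ({ toFun := fun B => B.map (algebraMap ℝ ℂ)
       map_add' := fun B C => by ext i j; simp [Matrix.map_apply]
       map_smul' := fun r B => by ext i j; simp [Matrix.map_apply] } :
      Matrix (Fin n) (Fin n) ℝ →ₗ[ℝ] Matrix (Fin n) (Fin n) ℂ)

theorem map_exp_real (M : Matrix (Fin n) (Fin n) ℝ) (s : ℝ) :
    (exp (-s • M)).map (algebraMap ℝ ℂ) = exp (-s • M.map (algebraMap ℝ ℂ)) := by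
  have h1 : ((algebraMap ℝ ℂ).mapMatrix (exp (-s • M)) : Matrix (Fin n) (Fin n) ℂ)
      = exp ((algebraMap ℝ ℂ).mapMatrix (-s • M)) :=
    map_exp ((algebraMap ℝ ℂ).mapMatrix) continuous_mapMatrix _
  have h2 : ((algebraMap ℝ ℂ).mapMatrix (-s • M) : Matrix (Fin n) (Fin n) ℂ)
      = -s • M.map (algebraMap ℝ ℂ) := by
    ext i j
    simp [RingHom.mapMatrix_apply, Matrix.map_apply]
  have h3 : (exp : Matrix (Fin n) (Fin n) ℂ → _) = exp := rfl
  calc (exp (-s • M)).map (algebraMap ℝ ℂ)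
      = (algebraMap ℝ ℂ).mapMatrix (exp (-s • M)) := rfl
    _ = exp (-s • M.map (algebraMap ℝ ℂ)) := by rw [h1, h2]
    _ = exp (-s • M.map (algebraMap ℝ ℂ)) := by rw [h3]

theorem decay_exp_real (M : Matrix (Fin n) (Fin n) ℝ)
    (hM : ∀ μ ∈ spectrum ℂ (M.map (algebraMap ℝ ℂ)), 0 < μ.re) :
    Decay (fun s : ℝ => exp (-s • M)) := by
  refine Decay.of_le (decay_exp_complex (M.map (algebraMap ℝ ℂ)) hM) fun s _ => ?_
  rw [← map_exp_real, map_algebraMap_norm]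


set_option maxHeartbeats 1000000 in
theorem norm_transpose_le (B : Matrix (Fin n) (Fin n) ℝ) : ‖Bᵀ‖ ≤ (n : ℝ) * ‖B‖ := by
  have hrow : ∀ i : Fin n, ∑ j' : Fin n, ‖B i j'‖₊ ≤ ‖B‖₊ := fun i => by
    rw [Matrix.linfty_opNNNorm_def]
    exact Finset.le_sup (f := fun i : Fin n => ∑ j' : Fin n, ‖B i j'‖₊) (Finset.mem_univ i)
  have h1 : ∀ i j : Fin n, ‖Bᵀ j i‖₊ ≤ ‖B‖₊ := fun i j =>
    le_trans (Finset.single_le_sum (f := fun j' : Fin n => ‖B i j'‖₊)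
      (fun _ _ => zero_le) (Finset.mem_univ j)) (hrow i)
  have key : ‖Bᵀ‖₊ ≤ (n : NNReal) * ‖B‖₊ := by
    rw [Matrix.linfty_opNNNorm_def (A := Bᵀ)]
    refine Finset.sup_le fun j _ => ?_
    calc ∑ i : Fin n, ‖Bᵀ j i‖₊ ≤ ∑ _i : Fin n, ‖B‖₊ := Finset.sum_le_sum fun i _ => h1 i j
      _ = (n : NNReal) * ‖B‖₊ := by simp [mul_comm]
  have h2 := NNReal.coe_le_coe.mpr key
  simpa using h2

theorem decay_integrand (M : Matrix (Fin n) (Fin n) ℝ)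
    (hM : ∀ μ ∈ spectrum ℂ (M.map (algebraMap ℝ ℂ)), 0 < μ.re) :
    Decay (fun s : ℝ => exp (-s • M) * (exp (-s • M))ᵀ) := by
  obtain ⟨C, δ, hδ, hC⟩ := decay_exp_real M hM
  have hC0 : 0 ≤ C := by
    have h0 := hC 0 le_rfl
    simp only [mul_zero, Real.exp_zero, mul_one] at h0
    exact le_trans (norm_nonneg _) h0
  refine ⟨(n : ℝ) * C * C, δ, hδ, fun s hs => ?_⟩
  have hE := hC s hs
  have hexp1 : Real.exp (-δ * s) ≤ 1 := by
    rw [Real.exp_le_one_iff]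
    nlinarith
  have hexp0 : 0 ≤ Real.exp (-δ * s) := (Real.exp_pos _).le
  have hEnn : (0:ℝ) ≤ ‖exp (-s • M)‖ := norm_nonneg _
  calc ‖exp (-s • M) * (exp (-s • M))ᵀ‖
      ≤ ‖exp (-s • M)‖ * ‖(exp (-s • M))ᵀ‖ := norm_mul_le _ _
    _ ≤ ‖exp (-s • M)‖ * ((n : ℝ) * ‖exp (-s • M)‖) := by
        have := norm_transpose_le (exp (-s • M))
        exact mul_le_mul_of_nonneg_left this hEnn
    _ ≤ (C * Real.exp (-δ * s)) * ((n : ℝ) * (C * Real.exp (-δ * s))) := by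
        have hn : (0:ℝ) ≤ n := Nat.cast_nonneg n
        have hsq : ‖exp (-s • M)‖ * ‖exp (-s • M)‖
            ≤ (C * Real.exp (-δ * s)) * (C * Real.exp (-δ * s)) :=
          mul_le_mul hE hE hEnn (by positivity)
        nlinarith
    _ = (n : ℝ) * C * C * (Real.exp (-δ * s) * Real.exp (-δ * s)) := by ring
    _ ≤ (n : ℝ) * C * C * Real.exp (-δ * s) := by
        have he : Real.exp (-δ * s) * Real.exp (-δ * s) ≤ Real.exp (-δ * s) := by nlinarith
        exact mul_le_mul_of_nonneg_left he
          (mul_nonneg (mul_nonneg (Nat.cast_nonneg n) hC0) hC0)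

theorem integrableOn_of_decay {E : Type*} [NormedAddCommGroup E] {f : ℝ → E}
    (hf : Continuous f) (h : Decay f) : IntegrableOn f (Ioi 0) volume := by
  obtain ⟨C, δ, hδ, hC⟩ := h
  have hint : IntegrableOn (fun s : ℝ => C * Real.exp (-δ * s)) (Ioi 0) volume :=
    (exp_neg_integrableOn_Ioi 0 hδ).const_mul C
  refine Integrable.mono' hint (hf.aestronglyMeasurable) ?_
  filter_upwards [ae_restrict_mem measurableSet_Ioi] with s hs
  exact hC s (le_of_lt hs)

theorem continuous_expM (M : Matrix (Fin n) (Fin n) ℝ) :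
    Continuous fun s : ℝ => exp (-s • M) :=
  exp_continuous.comp (continuous_neg.smul continuous_const)

/-- Transpose as a continuous linear map. -/
noncomputable def transposeCLM :
    Matrix (Fin n) (Fin n) ℝ →L[ℝ] Matrix (Fin n) (Fin n) ℝ :=
  LinearMap.toContinuousLinearMap
    { toFun := fun B => Bᵀ
      map_add' := fun B C => Matrix.transpose_add B C
      map_smul' := fun r B => Matrix.transpose_smul r B }

@[simp] theorem transposeCLM_apply (B : Matrix (Fin n) (Fin n) ℝ) :
    (transposeCLM B) = Bᵀ := rfl

/-- `B ↦ x ⬝ᵥ B *ᵥ x` as a continuous linear map. -/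
noncomputable def quadCLM (x : Fin n → ℝ) :
    Matrix (Fin n) (Fin n) ℝ →L[ℝ] ℝ :=
  LinearMap.toContinuousLinearMap
    { toFun := fun B => x ⬝ᵥ (B *ᵥ x)
      map_add' := fun B C => by simp [Matrix.add_mulVec, dotProduct_add]
      map_smul' := fun r B => by simp [Matrix.smul_mulVec, dotProduct_smul] }

@[simp] theorem quadCLM_apply (x : Fin n → ℝ) (B : Matrix (Fin n) (Fin n) ℝ) :
    quadCLM x B = x ⬝ᵥ (B *ᵥ x) := rfl

theorem dotProduct_self_nonneg' (y : Fin n → ℝ) : 0 ≤ y ⬝ᵥ y :=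
  Finset.sum_nonneg fun i _ => mul_self_nonneg (y i)

theorem dotProduct_self_pos' {y : Fin n → ℝ} (hy : y ≠ 0) : 0 < y ⬝ᵥ y := by
  obtain ⟨i, hi⟩ : ∃ i, y i ≠ 0 := by
    by_contra hc
    push_neg at hc
    exact hy (funext hc)
  exact Finset.sum_pos' (fun j _ => mul_self_nonneg (y j))
    ⟨i, Finset.mem_univ i, mul_self_pos.mpr hi⟩

theorem exp_transpose_mulVec_ne_zero (M : Matrix (Fin n) (Fin n) ℝ) (s : ℝ)
    {x : Fin n → ℝ} (hx : x ≠ 0) : (exp (-s • M))ᵀ *ᵥ x ≠ 0 := by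
  have hcomm : Commute (-s • M) (s • M) := ((Commute.refl M).smul_left (-s)).smul_right s
  have hone : exp (-s • M) * exp (s • M) = 1 := by
    exact (exp_add_of_commute hcomm).symm.trans (by rw [neg_smul, neg_add_cancel, exp_zero])
  have hT : (exp (s • M))ᵀ * (exp (-s • M))ᵀ = 1 := by
    rw [← Matrix.transpose_mul, hone, Matrix.transpose_one]
  intro hzero
  apply hx
  calc x = 1 *ᵥ x := (Matrix.one_mulVec x).symm
    _ = ((exp (s • M))ᵀ * (exp (-s • M))ᵀ) *ᵥ x := by rw [hT]
    _ = (exp (s • M))ᵀ *ᵥ ((exp (-s • M))ᵀ *ᵥ x) := (Matrix.mulVec_mulVec _ _ _).symm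
    _ = 0 := by rw [hzero, Matrix.mulVec_zero]

theorem quad_eq (M : Matrix (Fin n) (Fin n) ℝ) (s : ℝ) (x : Fin n → ℝ) :
    x ⬝ᵥ ((exp (-s • M) * (exp (-s • M))ᵀ) *ᵥ x)
      = ((exp (-s • M))ᵀ *ᵥ x) ⬝ᵥ ((exp (-s • M))ᵀ *ᵥ x) := by
  rw [← Matrix.mulVec_mulVec, Matrix.dotProduct_mulVec]
  congr 1
  rw [← Matrix.vecMul_transpose, Matrix.transpose_transpose]


end Stmt0Aux

/-- If all eigenvalues of the real `n × n` matrix `M` have strictly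
positive real part, then `C = ∫₀^∞ e^{-Ms} e^{-M*s} ds` converges, and `C` is a
symmetric positive definite matrix. -/
theorem stmt0 (n : ℕ) (M : Matrix (Fin n) (Fin n) ℝ)
    (hM : ∀ μ ∈ spectrum ℂ (M.map (algebraMap ℝ ℂ)), 0 < μ.re) :
    @IntegrableOn _ _ _ _
      (@SeminormedAddGroup.toContinuousENorm _
        Matrix.linftyOpNormedAddCommGroup.toSeminormedAddCommGroup.toSeminormedAddGroup)
      (fun s : ℝ => exp (-s • M) * (exp (-s • M))ᵀ) (Ioi 0) volume ∧
      ((∫ s in Ioi (0:ℝ), exp (-s • M) * (exp (-s • M))ᵀ).IsSymm ∧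
        (∫ s in Ioi (0:ℝ), exp (-s • M) * (exp (-s • M))ᵀ).PosDef) := by
  have hcont : Continuous fun s : ℝ => exp (-s • M) * (exp (-s • M))ᵀ :=
    (Stmt0Aux.continuous_expM M).mul
      ((Stmt0Aux.transposeCLM).continuous.comp (Stmt0Aux.continuous_expM M))
  have hint : @IntegrableOn _ _ _ _
      (@SeminormedAddGroup.toContinuousENorm _
        Matrix.linftyOpNormedAddCommGroup.toSeminormedAddCommGroup.toSeminormedAddGroup) (fun s : ℝ => exp (-s • M) * (exp (-s • M))ᵀ)
      (Ioi 0) volume :=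
    Stmt0Aux.integrableOn_of_decay hcont (Stmt0Aux.decay_integrand M hM)
  have hsymm : (∫ s in Ioi (0:ℝ), exp (-s • M) * (exp (-s • M))ᵀ).IsSymm := by
    have h := (Stmt0Aux.transposeCLM).integral_comp_comm hint
    have hpt : (fun s : ℝ => Stmt0Aux.transposeCLM (exp (-s • M) * (exp (-s • M))ᵀ))
        = fun s : ℝ => exp (-s • M) * (exp (-s • M))ᵀ := by
      funext s
      rw [Stmt0Aux.transposeCLM_apply, Matrix.transpose_mul, Matrix.transpose_transpose]
    show (∫ s in Ioi (0:ℝ), exp (-s • M) * (exp (-s • M))ᵀ)ᵀ = _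
    calc (∫ s in Ioi (0:ℝ), exp (-s • M) * (exp (-s • M))ᵀ)ᵀ
        = Stmt0Aux.transposeCLM (∫ s in Ioi (0:ℝ), exp (-s • M) * (exp (-s • M))ᵀ) := rfl
      _ = ∫ s in Ioi (0:ℝ), Stmt0Aux.transposeCLM (exp (-s • M) * (exp (-s • M))ᵀ) := h.symm
      _ = ∫ s in Ioi (0:ℝ), exp (-s • M) * (exp (-s • M))ᵀ := by rw [hpt]
  refine ⟨hint, hsymm, Matrix.posDef_iff_dotProduct_mulVec.mpr ⟨?_, ?_⟩⟩
  · -- Hermitian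
    rw [Matrix.IsHermitian, Matrix.conjTranspose_eq_transpose_of_trivial]
    exact hsymm
  · -- positive definiteness
    intro x hx
    have hst : star x = x := by
      funext i
      simp
    rw [hst]
    have h := (Stmt0Aux.quadCLM x).integral_comp_comm hint
    have hq : x ⬝ᵥ ((∫ s in Ioi (0:ℝ), exp (-s • M) * (exp (-s • M))ᵀ) *ᵥ x)
        = ∫ s in Ioi (0:ℝ), x ⬝ᵥ ((exp (-s • M) * (exp (-s • M))ᵀ) *ᵥ x) :=
      calc x ⬝ᵥ ((∫ s in Ioi (0:ℝ), exp (-s • M) * (exp (-s • M))ᵀ) *ᵥ x)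
          = (Stmt0Aux.quadCLM x) (∫ s in Ioi (0:ℝ), exp (-s • M) * (exp (-s • M))ᵀ) := rfl
        _ = ∫ s in Ioi (0:ℝ), (Stmt0Aux.quadCLM x) (exp (-s • M) * (exp (-s • M))ᵀ) := h.symm
        _ = ∫ s in Ioi (0:ℝ), x ⬝ᵥ ((exp (-s • M) * (exp (-s • M))ᵀ) *ᵥ x) := rfl
    rw [hq]
    have hposall : ∀ s : ℝ, 0 < x ⬝ᵥ ((exp (-s • M) * (exp (-s • M))ᵀ) *ᵥ x) := by
      intro s
      rw [Stmt0Aux.quad_eq]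
      exact Stmt0Aux.dotProduct_self_pos' (Stmt0Aux.exp_transpose_mulVec_ne_zero M s hx)
    have hginteg : IntegrableOn
        (fun s : ℝ => x ⬝ᵥ ((exp (-s • M) * (exp (-s • M))ᵀ) *ᵥ x)) (Ioi 0) volume :=
      (Stmt0Aux.quadCLM x).integrable_comp hint
    have hae : 0 ≤ᵐ[volume.restrict (Ioi (0:ℝ))]
        fun s : ℝ => x ⬝ᵥ ((exp (-s • M) * (exp (-s • M))ᵀ) *ᵥ x) :=
      Filter.Eventually.of_forall fun s => (hposall s).le
    rw [setIntegral_pos_iff_support_of_nonneg_ae hae hginteg]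
    have hsupp : (Function.support fun s : ℝ =>
        x ⬝ᵥ ((exp (-s • M) * (exp (-s • M))ᵀ) *ᵥ x)) ∩ Ioi 0 = Ioi 0 := by
      refine Set.inter_eq_right.mpr fun s _ => ?_
      exact (hposall s).ne'
    rw [hsupp, Real.volume_Ioi]
    exact ENNReal.zero_lt_top
end

section
/- Let M be an n×n real matrix with all eigenvalues of strictly positive real part, and C = ∫₀^∞ e^{-Ms} e^{-M*s} ds. Then MC is symmetric if and only if M is symmetric; consequently the area correction (MC - CM*)/2 vanishes if and only if M is symmetric. -/
open MeasureTheory Matrix Set NormedSpace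

attribute [local instance] Matrix.linftyOpNormedAddCommGroup Matrix.linftyOpNormedSpace
  Matrix.linftyOpNormedRing Matrix.linftyOpNormedAlgebra

open Filter Topology
open scoped NNReal ENNReal

set_option maxHeartbeats 1000000

namespace Stmt3Aux

variable {n : ℕ}

noncomputable instance instCENormMat : ContinuousENorm (Matrix (Fin n) (Fin n) ℝ) :=
  SeminormedAddGroup.toContinuousENorm

instance instPMetrMat : TopologicalSpace.PseudoMetrizableSpace (Matrix (Fin n) (Fin n) ℝ) :=
  TopologicalSpace.pseudoMetrizableSpace_pi

theorem mulVec_exp_eigen (B : Matrix (Fin n) (Fin n) ℂ) (l : ℂ) (v : Fin n → ℂ)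
    (hv : B.mulVec v = l • v) : (exp B).mulVec v = Complex.exp l • v := by
  haveI : CompleteSpace (Matrix (Fin n) (Fin n) ℂ) := FiniteDimensional.complete ℂ _
  have hl : Complex.exp l = ∑' k : ℕ, ((Nat.factorial k : ℂ))⁻¹ * l ^ k := by
    rw [Complex.exp_eq_exp_ℂ, exp_eq_tsum ℂ]
    exact tsum_congr fun k => (smul_eq_mul _ _).symm
  have hpow : ∀ k : ℕ, (B ^ k).mulVec v = (l ^ k) • v := by
    intro k
    induction k with
    | zero => simp
    | succ k ih =>
      rw [pow_succ, ← Matrix.mulVec_mulVec, hv, Matrix.mulVec_smul, ih, smul_smul,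
        pow_succ]
      ring_nf
  let L : Matrix (Fin n) (Fin n) ℂ →ₗ[ℂ] (Fin n → ℂ) :=
    { toFun := fun A => A.mulVec v
      map_add' := fun A B => Matrix.add_mulVec A B v
      map_smul' := fun c A => by simp [Matrix.smul_mulVec] }
  let Lc : Matrix (Fin n) (Fin n) ℂ →L[ℂ] (Fin n → ℂ) := ⟨L, L.continuous_of_finiteDimensional⟩
  have hsum : Summable fun k : ℕ => ((Nat.factorial k : ℂ))⁻¹ • B ^ k := expSeries_summable' B
  have h1 : (exp B).mulVec v = Lc (exp B) := rfl
  rw [h1, exp_eq_tsum ℂ, Lc.map_tsum hsum]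
  have h2 : ∀ k : ℕ, Lc (((Nat.factorial k : ℂ))⁻¹ • B ^ k) = ((Nat.factorial k : ℂ))⁻¹ • (l ^ k • v) := by
    intro k
    show (((Nat.factorial k : ℂ))⁻¹ • B ^ k).mulVec v = _
    rw [Matrix.smul_mulVec, hpow]
  rw [tsum_congr h2]
  rw [hl]
  have hsum2 : Summable fun k : ℕ => ((Nat.factorial k : ℂ))⁻¹ * l ^ k := by
    simpa [smul_eq_mul] using expSeries_summable' (𝕂 := ℂ) l
  rw [← hsum2.tsum_smul_const]
  exact tsum_congr fun k => by rw [smul_smul]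

theorem spec_exp (B : Matrix (Fin n) (Fin n) ℂ) {μ : ℂ} (hμ : μ ∈ spectrum ℂ (exp B)) :
    ∃ l ∈ spectrum ℂ B, μ = Complex.exp l := by
  let e : Matrix (Fin n) (Fin n) ℂ ≃ₐ[ℂ] _ := Matrix.toLinAlgEquiv'
  rw [← AlgEquiv.spectrum_eq e, ← Module.End.hasEigenvalue_iff_mem_spectrum] at hμ
  -- eigenspace of exp B for μ
  set E := Module.End.eigenspace (e (exp B)) μ with hE
  haveI : Nontrivial E := Submodule.nontrivial_iff_ne_bot.mpr hμ
  have hcomm : e B * e (exp B) = e (exp B) * e B := by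
    rw [← _root_.map_mul, ← _root_.map_mul, ((Commute.refl B).exp_right).eq]
  have hinv : ∀ x ∈ E, e B x ∈ E := by
    intro x hx
    rw [hE, Module.End.mem_eigenspace_iff] at hx ⊢
    calc (e (exp B)) ((e B) x) = (e B * e (exp B)) x := by rw [hcomm]; rfl
      _ = (e B) ((e (exp B)) x) := rfl
      _ = μ • (e B) x := by rw [hx, _root_.map_smul]
  let g : Module.End ℂ E := (e B).restrict hinv
  obtain ⟨lam, hlam⟩ := Module.End.exists_eigenvalue g
  obtain ⟨w, hw⟩ := hlam.exists_hasEigenvector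
  have hw0 : (w : Fin n → ℂ) ≠ 0 := fun h => hw.right (Subtype.ext h)
  have hgw : e B (w : Fin n → ℂ) = lam • (w : Fin n → ℂ) := by
    have := hw.apply_eq_smul
    have h2 := congrArg (Subtype.val) this
    simpa [g, LinearMap.restrict_apply] using h2
  have hBv : B.mulVec w = lam • (w : Fin n → ℂ) := by
    rwa [Matrix.toLinAlgEquiv'_apply] at hgw
  refine ⟨lam, ?_, ?_⟩
  · rw [← AlgEquiv.spectrum_eq e, ← Module.End.hasEigenvalue_iff_mem_spectrum]
    exact Module.End.hasEigenvalue_of_hasEigenvector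
      ⟨Module.End.mem_eigenspace_iff.mpr (by rw [Matrix.toLinAlgEquiv'_apply]; exact hBv), hw0⟩
  · have h1 : e (exp B) (w : Fin n → ℂ) = μ • (w : Fin n → ℂ) :=
      Module.End.mem_eigenspace_iff.mp w.2
    have h2 : (exp B).mulVec w = Complex.exp lam • (w : Fin n → ℂ) :=
      mulVec_exp_eigen B lam w hBv
    rw [Matrix.toLinAlgEquiv'_apply] at h1
    rw [h1] at h2
    have hz : (μ - Complex.exp lam) • (w : Fin n → ℂ) = 0 := by
      rw [sub_smul, h2, sub_self]
    rcases smul_eq_zero.mp hz with h | h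
    · exact (sub_eq_zero.mp h)
    · exact absurd h hw0

theorem norm_mapC (A : Matrix (Fin n) (Fin n) ℝ) : ‖A.map (algebraMap ℝ ℂ)‖ = ‖A‖ := by
  rw [Matrix.linfty_opNorm_def, Matrix.linfty_opNorm_def]
  congr 1
  refine Finset.sup_congr rfl fun i _ => Finset.sum_congr rfl fun j _ => ?_
  simp [Matrix.map_apply]


theorem continuous_mapC :
    Continuous fun A : Matrix (Fin n) (Fin n) ℝ => A.map (algebraMap ℝ ℂ) := by
  let L : Matrix (Fin n) (Fin n) ℝ →ₗ[ℝ] Matrix (Fin n) (Fin n) ℂ :=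
    { toFun := fun A => A.map (algebraMap ℝ ℂ)
      map_add' := fun A B => by ext i j; simp [Matrix.map_apply]
      map_smul' := fun c A => by ext i j; simp [Matrix.map_apply] }
  exact L.continuous_of_finiteDimensional


theorem exp_mapC (A : Matrix (Fin n) (Fin n) ℝ) :
    (exp A).map (algebraMap ℝ ℂ) = exp (A.map (algebraMap ℝ ℂ)) := by
  haveI : CompleteSpace (Matrix (Fin n) (Fin n) ℝ) := FiniteDimensional.complete ℝ _
  haveI : CompleteSpace (Matrix (Fin n) (Fin n) ℂ) := FiniteDimensional.complete ℝ _
  have h := map_exp ((algebraMap ℝ ℂ).mapMatrix :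
      Matrix (Fin n) (Fin n) ℝ →+* Matrix (Fin n) (Fin n) ℂ) continuous_mapC A
  exact h

theorem smul_mapC (r : ℝ) (A : Matrix (Fin n) (Fin n) ℝ) :
    (r • A).map (algebraMap ℝ ℂ) = r • A.map (algebraMap ℝ ℂ) := by
  ext i j
  simp only [Matrix.map_apply, Matrix.smul_apply, smul_eq_mul, Complex.real_smul]
  push_cast
  ring_nf
  exact mul_comm _ _

-- complex decay

theorem decayC (hn : 0 < n) (B : Matrix (Fin n) (Fin n) ℂ)
    (hB : ∀ μ ∈ spectrum ℂ B, 0 < μ.re) :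
    ∃ K c : ℝ, 0 < c ∧ ∀ s : ℝ, 0 ≤ s → ‖exp (-(s • B))‖ ≤ K * Real.exp (-(c * s)) := by
  haveI : CompleteSpace (Matrix (Fin n) (Fin n) ℂ) := FiniteDimensional.complete ℂ _
  haveI : Nonempty (Fin n) := Fin.pos_iff_nonempty.mp hn
  haveI : Nontrivial (Matrix (Fin n) (Fin n) ℂ) := by
    refine ⟨1, 0, fun h => ?_⟩
    have := congrFun (congrFun h ⟨0, hn⟩) ⟨0, hn⟩
    simp [Matrix.one_apply] at this
  set a := exp (-B) with ha
  -- all spectrum elements of a have nnnorm < 1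
  have hspec : ∀ μ ∈ spectrum ℂ a, ‖μ‖₊ < 1 := by
    intro μ hμ
    obtain ⟨l, hl, rfl⟩ := spec_exp (-B) hμ
    rw [← spectrum.neg_eq, Set.mem_neg] at hl
    have hre : 0 < (-l).re := hB _ hl
    have : ‖Complex.exp l‖ < 1 := by
      rw [Complex.norm_exp]
      apply Real.exp_lt_one_iff.mpr
      simpa using hre
    exact this
  obtain ⟨μ₀, hμ₀, hmax⟩ := Set.exists_max_image (spectrum ℂ a) (fun μ => ‖μ‖₊)
    (Matrix.finite_spectrum a) (spectrum.nonempty a)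
  set ρ : ℝ≥0 := (‖μ₀‖₊ + 1) / 2 with hρ
  have hμ₀1 : ‖μ₀‖₊ < 1 := hspec μ₀ hμ₀
  have hρ1 : ρ < 1 := by
    rw [hρ, div_lt_one (by norm_num : (0:ℝ≥0) < 2)]
    calc ‖μ₀‖₊ + 1 < 1 + 1 := add_lt_add_left hμ₀1 1
    _ = 2 := by norm_num
  have hμ₀ρ : ‖μ₀‖₊ < ρ := by
    rw [hρ, lt_div_iff₀ (by norm_num : (0:ℝ≥0) < 2)]
    calc ‖μ₀‖₊ * 2 = ‖μ₀‖₊ + ‖μ₀‖₊ := by ring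
    _ < ‖μ₀‖₊ + 1 := add_lt_add_right hμ₀1 _
  have hrad : spectralRadius ℂ a < (ρ : ℝ≥0∞) := by
    have h1 : spectralRadius ℂ a ≤ (‖μ₀‖₊ : ℝ≥0∞) := by
      rw [spectralRadius]
      exact iSup₂_le fun k hk => ENNReal.coe_le_coe.mpr (hmax k hk)
    exact lt_of_le_of_lt h1 (ENNReal.coe_lt_coe.mpr hμ₀ρ)
  have hlimsup := lt_of_le_of_lt (spectrum.limsup_pow_nnnorm_pow_one_div_le_spectralRadius a) hrad
  have hev : ∀ᶠ k : ℕ in atTop, ((‖a ^ k‖₊ : ℝ≥0∞) ^ (1 / (k:ℝ))) < (ρ : ℝ≥0∞) :=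
    Filter.eventually_lt_of_limsup_lt hlimsup
  obtain ⟨N, hN⟩ := Filter.eventually_atTop.mp hev
  -- ∀ k ≥ max N 1, ‖a ^ k‖ ≤ ρ ^ k
  have hpow : ∀ k : ℕ, N ≤ k → 1 ≤ k → ‖a ^ k‖ ≤ (ρ : ℝ) ^ k := by
    intro k hk1 hk2
    have h1 := hN k hk1
    have hk0 : (k : ℝ) ≠ 0 := by positivity
    have h2 : ((‖a ^ k‖₊ : ℝ≥0∞) ^ (1 / (k:ℝ))) ^ (k : ℝ) ≤ (ρ : ℝ≥0∞) ^ (k : ℝ) :=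
      ENNReal.rpow_le_rpow h1.le (by positivity)
    rw [← ENNReal.rpow_mul, one_div, inv_mul_cancel₀ hk0, ENNReal.rpow_one] at h2
    rw [ENNReal.rpow_natCast] at h2
    have h3 : (‖a ^ k‖₊ : ℝ≥0∞) ≤ ((ρ ^ k : ℝ≥0) : ℝ≥0∞) := by
      rwa [ENNReal.coe_pow]
    have h4 : ‖a ^ k‖₊ ≤ ρ ^ k := ENNReal.coe_le_coe.mp h3
    exact_mod_cast h4
  -- real constants
  set x : ℝ := (ρ : ℝ) with hx
  have hx0 : 0 < x := by
    rw [hx, hρ]; positivity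
  have hx1 : x < 1 := by exact_mod_cast hρ1
  set c : ℝ := -Real.log x with hc
  have hc0 : 0 < c := by
    rw [hc, neg_pos]; exact Real.log_neg hx0 hx1
  have hxk : ∀ k : ℕ, x ^ k = Real.exp (-(c * k)) := by
    intro k
    rw [← Real.exp_log hx0, ← Real.exp_nat_mul]
    congr 1
    rw [hc]; ring
  -- continuity and compact bound
  have hcont : Continuous fun s : ℝ => exp (-(s • B)) :=
    exp_continuous.comp ((continuous_id.smul continuous_const).neg)
  set N1 : ℕ := max N 1 with hN1
  obtain ⟨Kc, hKc⟩ := (isCompact_Icc (a := (0:ℝ)) (b := (N1:ℝ)+1)).exists_bound_of_continuousOn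
    hcont.continuousOn
  have hKc0 : 0 ≤ Kc :=
    le_trans (norm_nonneg _) (hKc 0 (by constructor <;> [rfl; positivity]))
  refine ⟨(Kc + 1) * Real.exp (c * ((N1:ℝ)+1)), c, hc0, fun s hs => ?_⟩
  rcases le_or_gt s (N1:ℝ) with hsmall | hbig
  · have h1 : ‖exp (-(s • B))‖ ≤ Kc := hKc s ⟨hs, by linarith⟩
    have h2 : Kc ≤ (Kc + 1) * Real.exp (c * ((N1:ℝ)+1)) * Real.exp (-(c*s)) := by
      rw [mul_assoc, ← Real.exp_add]
      have he : (1:ℝ) ≤ Real.exp (c * ((N1:ℝ)+1) + -(c*s)) :=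
        Real.one_le_exp (by nlinarith)
      nlinarith
    linarith
  · set k : ℕ := ⌊s⌋₊ with hk
    have hks : (k:ℝ) ≤ s := Nat.floor_le hs
    have hsk1 : s < (k:ℝ) + 1 := Nat.lt_floor_add_one s
    have hkN1 : N1 ≤ k := Nat.le_floor hbig.le
    have hdecomp : exp (-(s • B)) = a ^ k * exp (-((s - (k:ℝ)) • B)) := by
      rw [ha, ← Matrix.exp_nsmul, ← Matrix.exp_add_of_commute]
      · congr 1
        rw [← Nat.cast_smul_eq_nsmul ℝ k (-B)]
        module
      · rw [← Nat.cast_smul_eq_nsmul ℝ k (-B)]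
        exact ((((Commute.refl B).neg_left).smul_left ((k:ℝ))).smul_right (s - (k:ℝ))).neg_right
    have hb1 : ‖a ^ k‖ ≤ x ^ k :=
      hpow k (le_trans (le_max_left _ _) hkN1) (le_trans (le_max_right _ _) hkN1)
    have hb2 : ‖exp (-((s - (k:ℝ)) • B))‖ ≤ Kc := by
      apply hKc
      have hN1k : (1:ℕ) ≤ N1 := le_max_right _ _
      have h1N : (1:ℝ) ≤ (N1:ℝ) := by exact_mod_cast hN1k
      exact ⟨by linarith, by linarith⟩
    calc ‖exp (-(s • B))‖ ≤ ‖a ^ k‖ * ‖exp (-((s - (k:ℝ)) • B))‖ := by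
          rw [hdecomp]; exact norm_mul_le _ _
      _ ≤ x ^ k * Kc := by
          apply mul_le_mul hb1 hb2 (norm_nonneg _) (by positivity)
      _ ≤ (Kc + 1) * Real.exp (c * ((N1:ℝ)+1)) * Real.exp (-(c*s)) := by
          rw [hxk k]
          have he1 : Real.exp (-(c * k)) ≤ Real.exp (c) * Real.exp (-(c*s)) := by
            rw [← Real.exp_add]
            apply Real.exp_le_exp.mpr
            nlinarith
          have he2 : Real.exp (c) ≤ Real.exp (c * ((N1:ℝ)+1)) := by
            apply Real.exp_le_exp.mpr
            have hN1k : (1:ℕ) ≤ N1 := le_max_right _ _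
            have : (1:ℝ) ≤ (N1:ℝ) := by exact_mod_cast hN1k
            nlinarith
          have h3 : 0 ≤ Real.exp (-(c*s)) := Real.exp_nonneg _
          have hfac : Real.exp c * Kc ≤ (Kc + 1) * Real.exp (c * ((N1:ℝ)+1)) := by
            nlinarith [mul_le_mul_of_nonneg_right he2 hKc0,
              Real.exp_nonneg (c * ((N1:ℝ)+1)), Real.exp_nonneg c]
          calc Real.exp (-(c * k)) * Kc ≤ (Real.exp (c) * Real.exp (-(c*s))) * Kc :=
                mul_le_mul_of_nonneg_right he1 hKc0
            _ = (Real.exp c * Kc) * Real.exp (-(c*s)) := by ring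
            _ ≤ ((Kc + 1) * Real.exp (c * ((N1:ℝ)+1))) * Real.exp (-(c*s)) :=
                mul_le_mul_of_nonneg_right hfac h3

theorem decayR (hn : 0 < n) (A : Matrix (Fin n) (Fin n) ℝ)
    (hA : ∀ μ ∈ spectrum ℂ (A.map (algebraMap ℝ ℂ)), 0 < μ.re) :
    ∃ K c : ℝ, 0 < c ∧ ∀ s : ℝ, 0 ≤ s → ‖exp (-s • A)‖ ≤ K * Real.exp (-(c * s)) := by
  obtain ⟨K, c, hc, h⟩ := decayC hn (A.map (algebraMap ℝ ℂ)) hA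
  refine ⟨K, c, hc, fun s hs => ?_⟩
  have hmap : (-s • A).map (algebraMap ℝ ℂ) = -(s • A.map (algebraMap ℝ ℂ)) := by
    rw [smul_mapC (-s) A, neg_smul]
  have heq : ‖exp (-s • A)‖ = ‖exp (-(s • A.map (algebraMap ℝ ℂ)))‖ := by
    rw [← norm_mapC, exp_mapC, hmap]
  rw [heq]
  exact h s hs

theorem spectrum_transposeC (B : Matrix (Fin n) (Fin n) ℂ) :
    spectrum ℂ Bᵀ = spectrum ℂ B := by
  ext μ
  rw [spectrum.mem_iff, spectrum.mem_iff]
  have h : algebraMap ℂ (Matrix (Fin n) (Fin n) ℂ) μ - Bᵀ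
      = (algebraMap ℂ (Matrix (Fin n) (Fin n) ℂ) μ - B)ᵀ := by
    rw [Matrix.transpose_sub]
    congr 1
    rw [Algebra.algebraMap_eq_smul_one, Matrix.transpose_smul, Matrix.transpose_one]
  rw [h, Matrix.isUnit_iff_isUnit_det, Matrix.det_transpose, ← Matrix.isUnit_iff_isUnit_det]

theorem hasDerivAt_expM (A : Matrix (Fin n) (Fin n) ℝ) (s : ℝ) :
    HasDerivAt (fun u : ℝ => exp (-u • A)) (-A * exp (-s • A)) s := by
  haveI : CompleteSpace (Matrix (Fin n) (Fin n) ℝ) := FiniteDimensional.complete ℝ _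
  have h := hasDerivAt_exp_smul_const' (𝕂 := ℝ) (-A) s
  simp only [smul_neg, neg_smul] at h ⊢
  exact h

theorem key (hn : 0 < n) (M : Matrix (Fin n) (Fin n) ℝ)
    (hM : ∀ μ ∈ spectrum ℂ (M.map (algebraMap ℝ ℂ)), 0 < μ.re) :
    M * (∫ s in Ioi (0:ℝ), exp (-s • M) * (exp (-s • M))ᵀ)
      + (∫ s in Ioi (0:ℝ), exp (-s • M) * (exp (-s • M))ᵀ) * Mᵀ = 1
    ∧ (∫ s in Ioi (0:ℝ), exp (-s • M) * (exp (-s • M))ᵀ)ᵀ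
      = ∫ s in Ioi (0:ℝ), exp (-s • M) * (exp (-s • M))ᵀ
    ∧ (Mᵀ = M → M * (∫ s in Ioi (0:ℝ), exp (-s • M) * (exp (-s • M))ᵀ)
      = (∫ s in Ioi (0:ℝ), exp (-s • M) * (exp (-s • M))ᵀ) * M) := by
  haveI : CompleteSpace (Matrix (Fin n) (Fin n) ℝ) := FiniteDimensional.complete ℝ _
  set E1 : ℝ → Matrix (Fin n) (Fin n) ℝ := fun s => exp (-s • M) with hE1def
  set E2 : ℝ → Matrix (Fin n) (Fin n) ℝ := fun s => exp (-s • Mᵀ) with hE2def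
  set G : ℝ → Matrix (Fin n) (Fin n) ℝ := fun s => E1 s * (E1 s)ᵀ with hGdef
  have hE1T : ∀ s : ℝ, (E1 s)ᵀ = E2 s := by
    intro s
    rw [hE1def, hE2def, ← Matrix.exp_transpose, Matrix.transpose_smul]
  have hGE2 : G = fun s => E1 s * E2 s := funext fun s => by
    show E1 s * (E1 s)ᵀ = E1 s * E2 s
    rw [hE1T]
  -- decay
  obtain ⟨K1, c1, hc1, hK1⟩ := decayR hn M hM
  have hMT : ∀ μ ∈ spectrum ℂ (Mᵀ.map (algebraMap ℝ ℂ)), 0 < μ.re := by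
    intro μ hμ
    rw [Matrix.transpose_map, spectrum_transposeC] at hμ
    exact hM μ hμ
  obtain ⟨K2, c2, hc2, hK2⟩ := decayR hn Mᵀ hMT
  have hK10 : 0 ≤ K1 := by
    have := hK1 0 le_rfl
    have h0 : (0:ℝ) ≤ ‖exp ((-0 : ℝ) • M)‖ := norm_nonneg _
    nlinarith [Real.exp_pos (-(c1 * 0))]
  have hK20 : 0 ≤ K2 := by
    have := hK2 0 le_rfl
    nlinarith [Real.exp_pos (-(c2 * 0)), norm_nonneg (exp ((-0 : ℝ) • Mᵀ))]
  have hc12 : 0 < c1 + c2 := by linarith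
  -- continuity
  have hE1cont : Continuous E1 := exp_continuous.comp ((continuous_id.neg).smul continuous_const)
  have hE2cont : Continuous E2 := exp_continuous.comp ((continuous_id.neg).smul continuous_const)
  have hGcont : Continuous G := by rw [hGE2]; exact hE1cont.mul hE2cont
  -- bound
  have hGbound : ∀ s : ℝ, 0 ≤ s → ‖G s‖ ≤ (K1 * K2) * Real.exp (-((c1 + c2) * s)) := by
    intro s hs
    calc ‖G s‖ ≤ ‖E1 s‖ * ‖(E1 s)ᵀ‖ := norm_mul_le _ _
      _ = ‖E1 s‖ * ‖E2 s‖ := by rw [hE1T]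
      _ ≤ (K1 * Real.exp (-(c1 * s))) * (K2 * Real.exp (-(c2 * s))) :=
          mul_le_mul (hK1 s hs) (hK2 s hs) (norm_nonneg _)
            (mul_nonneg hK10 (Real.exp_nonneg _))
      _ = (K1 * K2) * (Real.exp (-(c1 * s)) * Real.exp (-(c2 * s))) := by ring
      _ = (K1 * K2) * Real.exp (-((c1 + c2) * s)) := by
          rw [← Real.exp_add]
          congr 1
          ring
  -- integrability of G
  have hexp_int : IntegrableOn (fun s : ℝ => (K1 * K2) * Real.exp (-((c1 + c2) * s))) (Ioi 0) := by
    have h := (exp_neg_integrableOn_Ioi 0 hc12).const_mul (K1 * K2)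
    simp only [neg_mul] at h
    exact h
  have hGint : IntegrableOn G (Ioi 0) := by
    apply Integrable.mono' hexp_int hGcont.aestronglyMeasurable
    rw [ae_restrict_iff' measurableSet_Ioi]
    exact ae_of_all _ fun s hs => hGbound s (le_of_lt hs)
  -- derivative
  have hcommT : ∀ s : ℝ, Commute (-Mᵀ) (E2 s) := by
    intro s
    exact (((Commute.refl Mᵀ).smul_right (-s)).exp_right).neg_left
  set D : ℝ → Matrix (Fin n) (Fin n) ℝ := fun s => -(M * G s) - G s * Mᵀ with hDdef
  have hDder : ∀ s : ℝ, HasDerivAt G (D s) s := by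
    intro s
    rw [hGE2]
    have h1 : HasDerivAt E1 (-M * E1 s) s := hasDerivAt_expM M s
    have h2 : HasDerivAt E2 (-Mᵀ * E2 s) s := hasDerivAt_expM Mᵀ s
    have h := h1.mul h2
    refine h.congr_deriv ?_
    rw [hDdef, hGE2]
    simp only
    rw [(hcommT s).eq]
    noncomm_ring
  have hDcont : Continuous D := ((continuous_const.mul hGcont).neg).sub
    (hGcont.mul continuous_const)
  have hDbound : ∀ s : ℝ, 0 ≤ s →
      ‖D s‖ ≤ ((‖M‖ + ‖Mᵀ‖) * (K1 * K2)) * Real.exp (-((c1 + c2) * s)) := by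
    intro s hs
    have h1 : ‖D s‖ ≤ ‖M‖ * ‖G s‖ + ‖G s‖ * ‖Mᵀ‖ := by
      calc ‖D s‖ ≤ ‖-(M * G s)‖ + ‖G s * Mᵀ‖ := norm_sub_le _ _
        _ = ‖M * G s‖ + ‖G s * Mᵀ‖ := by rw [norm_neg]
        _ ≤ ‖M‖ * ‖G s‖ + ‖G s‖ * ‖Mᵀ‖ := add_le_add (norm_mul_le _ _) (norm_mul_le _ _)
    have h2 := hGbound s hs
    have h3 : (0:ℝ) ≤ ‖G s‖ := norm_nonneg _
    nlinarith [norm_nonneg M, norm_nonneg Mᵀ, Real.exp_nonneg (-((c1 + c2) * s))]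
  have hDint : IntegrableOn D (Ioi 0) := by
    have hexp_int2 : IntegrableOn
        (fun s : ℝ => ((‖M‖ + ‖Mᵀ‖) * (K1 * K2)) * Real.exp (-((c1 + c2) * s))) (Ioi 0) := by
      have h := (exp_neg_integrableOn_Ioi 0 hc12).const_mul ((‖M‖ + ‖Mᵀ‖) * (K1 * K2))
      simp only [neg_mul] at h
      exact h
    apply Integrable.mono' hexp_int2 hDcont.aestronglyMeasurable
    rw [ae_restrict_iff' measurableSet_Ioi]
    exact ae_of_all _ fun s hs => hDbound s (le_of_lt hs)
  -- tendsto
  have hGtend : Tendsto G atTop (𝓝 0) := by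
    have hub : ∀ᶠ s : ℝ in atTop, ‖G s‖ ≤ (K1 * K2) * Real.exp (-((c1 + c2) * s)) := by
      filter_upwards [eventually_ge_atTop (0:ℝ)] with s hs using hGbound s hs
    have h0 : Tendsto (fun s : ℝ => -((c1 + c2) * s)) atTop atBot := by
      have ha : Tendsto (fun s : ℝ => (c1 + c2) * s) atTop atTop :=
        Tendsto.const_mul_atTop hc12 tendsto_id
      exact tendsto_neg_atTop_atBot.comp ha
    have h1 : Tendsto (fun s : ℝ => Real.exp (-((c1 + c2) * s))) atTop (𝓝 0) :=
      Real.tendsto_exp_atBot.comp h0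
    have h2 : Tendsto (fun s : ℝ => (K1 * K2) * Real.exp (-((c1 + c2) * s))) atTop (𝓝 0) := by
      simpa [mul_zero] using h1.const_mul (K1 * K2)
    exact squeeze_zero_norm' hub h2
  -- FTC
  have hG0 : G 0 = 1 := by
    rw [hGdef]
    simp only [hE1def]
    norm_num
  have hFTC : ∫ s in Ioi (0:ℝ), D s = 0 - G 0 :=
    integral_Ioi_of_hasDerivAt_of_tendsto' (fun s _ => hDder s) hDint hGtend
  -- linearity
  set Cint := ∫ s in Ioi (0:ℝ), G s with hCint
  have hCeq : (∫ s in Ioi (0:ℝ), exp (-s • M) * (exp (-s • M))ᵀ) = Cint := rfl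
  let L1 : Matrix (Fin n) (Fin n) ℝ →L[ℝ] Matrix (Fin n) (Fin n) ℝ :=
    ContinuousLinearMap.mul ℝ _ M
  let L2 : Matrix (Fin n) (Fin n) ℝ →L[ℝ] Matrix (Fin n) (Fin n) ℝ :=
    (ContinuousLinearMap.mul ℝ _).flip Mᵀ
  have hL1 : ∀ X, L1 X = M * X := fun X => rfl
  have hL2 : ∀ X, L2 X = X * Mᵀ := fun X => rfl
  have hMG_int : IntegrableOn (fun s => M * G s) (Ioi 0) := L1.integrable_comp hGint
  have hGM_int : IntegrableOn (fun s => G s * Mᵀ) (Ioi 0) := L2.integrable_comp hGint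
  have hIntL1 : ∫ s in Ioi (0:ℝ), M * G s = M * Cint := L1.integral_comp_comm hGint
  have hIntL2 : ∫ s in Ioi (0:ℝ), G s * Mᵀ = Cint * Mᵀ := L2.integral_comp_comm hGint
  have hsplit : ∫ s in Ioi (0:ℝ), D s = -(M * Cint) - Cint * Mᵀ := by
    have h1 : ∫ s in Ioi (0:ℝ), D s
        = (∫ s in Ioi (0:ℝ), -(M * G s)) - ∫ s in Ioi (0:ℝ), G s * Mᵀ :=
      integral_sub hMG_int.neg hGM_int
    rw [h1, integral_neg, hIntL1, hIntL2]
  have hlyap : M * Cint + Cint * Mᵀ = 1 := by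
    have h2 : -(M * Cint) - Cint * Mᵀ = 0 - 1 := by rw [← hsplit, hFTC, hG0]
    have h3 : M * Cint + Cint * Mᵀ = -(-(M * Cint) - Cint * Mᵀ) := by abel
    rw [h3, h2]
    simp
  -- symmetry of Cint
  let Tl : Matrix (Fin n) (Fin n) ℝ →ₗ[ℝ] Matrix (Fin n) (Fin n) ℝ :=
    { toFun := fun X => Xᵀ
      map_add' := fun X Y => Matrix.transpose_add X Y
      map_smul' := fun r X => Matrix.transpose_smul r X }
  let Tc : Matrix (Fin n) (Fin n) ℝ →L[ℝ] Matrix (Fin n) (Fin n) ℝ :=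
    ⟨Tl, Tl.continuous_of_finiteDimensional⟩
  have hCsym : Cintᵀ = Cint := by
    have h1 : Cintᵀ = Tc Cint := rfl
    rw [h1]
    refine (Tc.integral_comp_comm hGint).symm.trans ?_
    refine integral_congr_ae (ae_of_all _ fun s => ?_)
    show (G s)ᵀ = G s
    show (E1 s * (E1 s)ᵀ)ᵀ = E1 s * (E1 s)ᵀ
    rw [Matrix.transpose_mul, Matrix.transpose_transpose]
  have hcommC : Mᵀ = M → M * Cint = Cint * M := by
    intro hsym
    have hpt : ∀ s, M * G s = G s * M := by
      intro s
      have h1 : Commute M (E1 s) := ((Commute.refl M).smul_right (-s)).exp_right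
      have h2 : Commute M ((E1 s)ᵀ) := by
        rw [hE1T s]
        show Commute M (exp (-s • Mᵀ))
        rw [hsym]
        exact h1
      exact (h1.mul_right h2).eq
    have hGM_int2 : IntegrableOn (fun s => G s * M) (Ioi 0) :=
      ((ContinuousLinearMap.mul ℝ (Matrix (Fin n) (Fin n) ℝ)).flip M).integrable_comp hGint
    calc M * Cint = ∫ s in Ioi (0:ℝ), M * G s := hIntL1.symm
      _ = ∫ s in Ioi (0:ℝ), G s * M := integral_congr_ae (ae_of_all _ fun s => hpt s)
      _ = Cint * M :=
          ((ContinuousLinearMap.mul ℝ (Matrix (Fin n) (Fin n) ℝ)).flip M).integral_comp_comm hGint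
  exact ⟨hlyap, hCsym, hcommC⟩

end Stmt3Aux

/-- `MC` is symmetric iff `M` is symmetric; consequently the area
correction `(MC - CM*)/2` vanishes iff `M` is symmetric. -/
theorem stmt3 (n : ℕ) (M : Matrix (Fin n) (Fin n) ℝ)
    (hM : ∀ μ ∈ spectrum ℂ (M.map (algebraMap ℝ ℂ)), 0 < μ.re)
    (C : Matrix (Fin n) (Fin n) ℝ)
    (hC : C = ∫ s in Ioi (0:ℝ), exp (-s • M) * (exp (-s • M))ᵀ) :
    ((M * C).IsSymm ↔ M.IsSymm) ∧
      ((1/2 : ℝ) • (M * C - C * Mᵀ) = 0 ↔ M.IsSymm) := by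
  rcases Nat.eq_zero_or_pos n with rfl | hn
  · haveI : Subsingleton (Matrix (Fin 0) (Fin 0) ℝ) :=
      ⟨fun a b => by ext i j; exact i.elim0⟩
    exact ⟨⟨fun _ => Subsingleton.elim _ _, fun _ => Subsingleton.elim _ _⟩,
      ⟨fun _ => Subsingleton.elim _ _, fun _ => Subsingleton.elim _ _⟩⟩
  · obtain ⟨hlyap, hCsym, hcomm⟩ := Stmt3Aux.key hn M hM
    rw [← hC] at hlyap hCsym hcomm
    have hMCt : (M * C)ᵀ = C * Mᵀ := by rw [Matrix.transpose_mul, hCsym]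
    have hmain : (M * C).IsSymm ↔ M.IsSymm := by
      constructor
      · intro h
        have h1 : M * C = C * Mᵀ := by rw [← hMCt]; exact h.symm
        have h2 : M * ((2:ℝ) • C) = 1 := by
          rw [mul_smul_comm, two_smul]
          calc M * C + M * C = M * C + C * Mᵀ := by rw [h1]
            _ = 1 := hlyap
        have h3 : ((2:ℝ) • C)⁻¹ = M := Matrix.inv_eq_left_inv h2
        have h4 : ((2:ℝ) • C)ᵀ = (2:ℝ) • C := by rw [Matrix.transpose_smul, hCsym]
        show Mᵀ = M
        rw [← h3, Matrix.transpose_nonsing_inv, h4]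
      · intro h
        have h1 : M * C = C * M := hcomm h
        show (M * C)ᵀ = M * C
        rw [hMCt, h, ← h1]
    refine ⟨hmain, ?_⟩
    rw [← hmain]
    constructor
    · intro h
      have h0 : M * C - C * Mᵀ = 0 := by
        rwa [smul_eq_zero_iff_right (by norm_num : (1/2:ℝ) ≠ 0)] at h
      rw [sub_eq_zero] at h0
      show (M * C)ᵀ = M * C
      rw [hMCt]
      exact h0.symm
    · intro h
      have h1 : M * C = C * Mᵀ := by rw [← hMCt]; exact h.symm
      rw [show M * C - C * Mᵀ = 0 from by rw [h1, sub_self], smul_zero]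
end

section
/- Let M be an n×n real matrix with ‖e^{-τM}‖ ≤ K e^{-λτ} (λ > 0), let m ∈ (0,1], let γ : [0,T] → ℝⁿ be α-Hölder with γ(0) = 0, α ∈ (0,1], and let z : [0,T] → ℝⁿ solve z(t) = ∫₀ᵗ e^{-(M/m)(t-r)} dγ(r) (Young/Riemann–Stieltjes integral). Then there is a constant C independent of m such that for all t ∈ [0,T] and δ ∈ (0,t], |z(t)| ≤ C(e^{-λδ/m} + δ^α). In particular, choosing δ = αm log(1/m)/λ, |z(t)| ≤ C m^α (1 + |log m|)^α. -/
open MeasureTheory Matrix Set NormedSpace intervalIntegral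
open scoped NNReal ENNReal

-- scalar helper inserted below
attribute [local instance] Matrix.linftyOpNormedAddCommGroup Matrix.linftyOpNormedSpace
  Matrix.linftyOpNormedRing Matrix.linftyOpNormedAlgebra

lemma expInt (β t a b : ℝ) (hβ : 0 < β) :
    ∫ r in a..b, Real.exp (-β*(t-r)) =
      (Real.exp (-β*(t-b)) - Real.exp (-β*(t-a)))/β := by
  have hD : ∀ r : ℝ, HasDerivAt (fun r => Real.exp (-β*(t-r))/β) (Real.exp (-β*(t-r))) r := by
    intro r
    have hin : HasDerivAt (fun r : ℝ => -β*(t-r)) β r := by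
      have := ((hasDerivAt_id r).const_sub t).const_mul (-β)
      simpa using this
    have := (Real.hasDerivAt_exp (-β*(t-r))).comp r hin
    have h2 := this.div_const β
    have h3 : HasDerivAt (fun r : ℝ => Real.exp (-β*(t-r))/β) (Real.exp (-β*(t-r)) * β / β) r := by
      simpa [Function.comp] using h2
    convert h3 using 1
    field_simp
  have hInt : IntervalIntegrable (fun r => Real.exp (-β*(t-r))) volume a b := by
    apply Continuous.intervalIntegrable; continuity
  have := intervalIntegral.integral_eq_sub_of_hasDerivAt (f := fun r => Real.exp (-β*(t-r))/β)
    (fun r _ => hD r) hInt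
  rw [this]; ring


noncomputable def mulVecCLM (n : ℕ) (v : Fin n → ℝ) :
    Matrix (Fin n) (Fin n) ℝ →L[ℝ] (Fin n → ℝ) :=
  LinearMap.toContinuousLinearMap
    { toFun := fun B => B.mulVec v
      map_add' := fun B C => Matrix.add_mulVec B C v
      map_smul' := fun c B => Matrix.smul_mulVec c B v }

lemma expCont (n : ℕ) (A : Matrix (Fin n) (Fin n) ℝ) (t : ℝ) :
    Continuous fun r : ℝ => A * NormedSpace.exp ((r - t) • A) := by
  exact continuous_const.mul
    (exp_continuous.comp ((continuous_id.sub continuous_const).smul continuous_const))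

lemma vecDeriv (n : ℕ) (A : Matrix (Fin n) (Fin n) ℝ) (v : Fin n → ℝ) (t r : ℝ) :
    HasDerivAt (fun r : ℝ => (NormedSpace.exp ((r - t) • A)).mulVec v)
      ((A * NormedSpace.exp ((r - t) • A)).mulVec v) r := by
  have h1 := hasDerivAt_exp_smul_const' (𝕂 := ℝ) A (r - t)
  have h2 : HasDerivAt (fun r : ℝ => r - t) 1 r := (hasDerivAt_id r).sub_const t
  have h3 : HasDerivAt (fun r : ℝ => NormedSpace.exp ((r - t) • A)) (A * NormedSpace.exp ((r - t) • A)) r := by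
    have h4 := h1.scomp r h2
    simp only [one_smul, Function.comp_def] at h4
    exact h4
  exact (mulVecCLM n v).hasFDerivAt.comp_hasDerivAt r h3

lemma vecFTC (n : ℕ) (A : Matrix (Fin n) (Fin n) ℝ) (v : Fin n → ℝ) (t : ℝ) :
    ∫ r in (0:ℝ)..t, (A * NormedSpace.exp ((r - t) • A)).mulVec v
      = v - (NormedSpace.exp ((-t) • A)).mulVec v := by
  have hInt : IntervalIntegrable (fun r : ℝ => (A * NormedSpace.exp ((r - t) • A)).mulVec v)
      volume 0 t :=
    ((expCont n A t).matrix_mulVec continuous_const).intervalIntegrable _ _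
  have := intervalIntegral.integral_eq_sub_of_hasDerivAt
    (f := fun r : ℝ => (NormedSpace.exp ((r - t) • A)).mulVec v)
    (fun r _ => vecDeriv n A v t r) hInt
  rw [this]
  simp [Matrix.one_mulVec, zero_sub]

lemma holderCont (n : ℕ) (T : ℝ) (α : ℝ) (hα0 : 0 < α)
    (γ : ℝ → (Fin n → ℝ)) (Hγ : ℝ) (hHγ : 0 ≤ Hγ)
    (hγ : ∀ s ∈ Icc (0:ℝ) T, ∀ t ∈ Icc (0:ℝ) T, ‖γ t - γ s‖ ≤ Hγ * |t - s| ^ α) :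
    ContinuousOn γ (Icc 0 T) := by
  set C : ℝ≥0 := ⟨Hγ, hHγ⟩ with hC
  have hH : HolderOnWith C ⟨α, hα0.le⟩ γ (Icc 0 T) := by
    intro x hx y hy
    calc edist (γ x) (γ y) = ENNReal.ofReal (‖γ x - γ y‖) := by
          rw [edist_dist, dist_eq_norm]
      _ ≤ ENNReal.ofReal (Hγ * |x - y| ^ α) :=
          ENNReal.ofReal_le_ofReal (by simpa [abs_sub_comm] using hγ y hy x hx)
      _ = (C : ℝ≥0∞) * edist x y ^ (α : ℝ) := by
          rw [ENNReal.ofReal_mul hHγ,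
            ← ENNReal.ofReal_rpow_of_nonneg (abs_nonneg _) hα0.le,
            edist_dist, Real.dist_eq, ENNReal.ofReal_eq_coe_nnreal hHγ]
          rfl
  exact hH.continuousOn (by exact_mod_cast hα0)

set_option maxHeartbeats 2000000 in
lemma keyBound (n : ℕ) (M : Matrix (Fin n) (Fin n) ℝ) (K lam : ℝ)
    (hK : 0 < K) (hlam : 0 < lam)
    (hdecay : ∀ τ : ℝ, 0 ≤ τ → ‖NormedSpace.exp (-τ • M)‖ ≤ K * Real.exp (-lam * τ))
    (T : ℝ) (hT : 0 < T) (α : ℝ) (hα0 : 0 < α) (hα1 : α ≤ 1)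
    (γ : ℝ → (Fin n → ℝ)) (hγ0 : γ 0 = 0) (Hγ : ℝ) (hHγ : 0 ≤ Hγ)
    (hγ : ∀ s ∈ Icc (0:ℝ) T, ∀ t ∈ Icc (0:ℝ) T, ‖γ t - γ s‖ ≤ Hγ * |t - s| ^ α)
    (m : ℝ) (hm0 : 0 < m) (hm1 : m ≤ 1)
    (t : ℝ) (ht0 : 0 ≤ t) (htT : t ≤ T) (δ : ℝ) (hδ : 0 < δ) :
    ‖γ t - ∫ r in (0:ℝ)..t, ((m⁻¹ • M) * NormedSpace.exp (-((t - r) / m) • M)).mulVec (γ r)‖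
      ≤ (K * Hγ * (T ^ α + 1) * (1 + ‖M‖ / lam)) *
        (Real.exp (-lam * δ / m) + δ ^ α) := by
  set A := m⁻¹ • M with hA
  set β := lam / m with hβdef
  have hβ : 0 < β := div_pos hlam hm0
  -- rewrite the exponential
  have hE : ∀ r : ℝ, NormedSpace.exp (-((t - r) / m) • M) = NormedSpace.exp ((r - t) • A) := by
    intro r
    congr 1
    rw [hA, smul_smul]
    congr 1
    field_simp
    ring
  -- decay for A
  have hdecayA : ∀ τ : ℝ, 0 ≤ τ → ‖NormedSpace.exp ((-τ) • A)‖ ≤ K * Real.exp (-β * τ) := by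
    intro τ hτ
    have h1 : (-τ) • A = -(τ / m) • M := by
      rw [hA, smul_smul]; congr 1; field_simp
    have h2 := hdecay (τ / m) (div_nonneg hτ hm0.le)
    rw [h1]
    have e : -β * τ = -lam * (τ / m) := by rw [hβdef]; ring
    rw [e]
    exact h2
  -- norm of A
  have hnA : ‖A‖ = m⁻¹ * ‖M‖ := by
    rw [hA, norm_smul, Real.norm_eq_abs, abs_of_pos (inv_pos.2 hm0)]
  -- continuity of γ
  have hcγ : ContinuousOn γ (Icc 0 T) := holderCont n T α hα0 γ Hγ hHγ hγ
  have hIccsub : Icc (0:ℝ) t ⊆ Icc 0 T := Icc_subset_Icc le_rfl htT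
  -- continuity of the integrands
  have hmulc : Continuous fun p : Matrix (Fin n) (Fin n) ℝ × (Fin n → ℝ) => p.1.mulVec p.2 :=
    continuous_fst.matrix_mulVec continuous_snd
  have hcont : ContinuousOn (fun r => (A * NormedSpace.exp ((r - t) • A)).mulVec (γ t - γ r))
      (Icc 0 t) :=
    hmulc.comp_continuousOn
      ((expCont n A t).continuousOn.prodMk (continuousOn_const.sub (hcγ.mono hIccsub)))
  have hcontγ : ContinuousOn (fun r => (A * NormedSpace.exp ((r - t) • A)).mulVec (γ r)) (Icc 0 t) :=
    hmulc.comp_continuousOn ((expCont n A t).continuousOn.prodMk (hcγ.mono hIccsub))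
  have hIntOn : ∀ a b : ℝ, a ∈ Icc (0:ℝ) t → b ∈ Icc (0:ℝ) t → a ≤ b →
      IntervalIntegrable (fun r => (A * NormedSpace.exp ((r - t) • A)).mulVec (γ t - γ r))
        volume a b := by
    intro a b ha hb hab
    exact (hcont.mono (by rw [uIcc_of_le hab]; exact Icc_subset_Icc ha.1 hb.2)).intervalIntegrable
  have hIntγ : IntervalIntegrable (fun r => (A * NormedSpace.exp ((r - t) • A)).mulVec (γ r))
      volume 0 t :=
    (hcontγ.mono (by rw [uIcc_of_le ht0])).intervalIntegrable
  have hIntConst : IntervalIntegrable (fun r => (A * NormedSpace.exp ((r - t) • A)).mulVec (γ t))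
      volume 0 t :=
    ((expCont n A t).matrix_mulVec continuous_const).intervalIntegrable _ _
  -- rewrite z
  have hz' : γ t - ∫ r in (0:ℝ)..t, ((m⁻¹ • M) * NormedSpace.exp (-((t - r) / m) • M)).mulVec (γ r)
      = (NormedSpace.exp ((-t) • A)).mulVec (γ t)
        + ∫ r in (0:ℝ)..t, (A * NormedSpace.exp ((r - t) • A)).mulVec (γ t - γ r) := by
    have h1 : (∫ r in (0:ℝ)..t, ((m⁻¹ • M) * NormedSpace.exp (-((t - r) / m) • M)).mulVec (γ r))
        = ∫ r in (0:ℝ)..t, (A * NormedSpace.exp ((r - t) • A)).mulVec (γ r) := by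
      simp only [hE, hA]
    have h2 : ∫ r in (0:ℝ)..t, (A * NormedSpace.exp ((r - t) • A)).mulVec (γ t - γ r)
        = (γ t - (NormedSpace.exp ((-t) • A)).mulVec (γ t))
          - ∫ r in (0:ℝ)..t, (A * NormedSpace.exp ((r - t) • A)).mulVec (γ r) := by
      rw [← vecFTC n A (γ t) t, ← intervalIntegral.integral_sub hIntConst hIntγ]
      congr 1
      funext r
      rw [Matrix.mulVec_sub]
    rw [h1, h2]
    abel
  rw [hz']
  set s := max (t - δ) 0 with hsdef
  have hs0 : 0 ≤ s := le_max_right _ _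
  have hstδ : t - δ ≤ s := le_max_left _ _
  have hst : s ≤ t := max_le (by linarith) ht0
  rw [← intervalIntegral.integral_add_adjacent_intervals
      (hIntOn 0 s ⟨le_rfl, ht0⟩ ⟨hs0, hst⟩ hs0) (hIntOn s t ⟨hs0, hst⟩ ⟨ht0, le_rfl⟩ hst)]
  have hEδ0 : (0:ℝ) < Real.exp (-lam * δ / m) := Real.exp_pos _
  have hP0 : (0:ℝ) ≤ δ ^ α := Real.rpow_nonneg hδ.le α
  have hTα0 : (0:ℝ) ≤ T ^ α := Real.rpow_nonneg (by linarith) α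
  have hnM : (0:ℝ) ≤ ‖M‖ := norm_nonneg _
  -- pointwise bound
  have hpt : ∀ r, 0 ≤ r → r ≤ t → ∀ B : ℝ, 0 ≤ B → ‖γ t - γ r‖ ≤ B →
      ‖(A * NormedSpace.exp ((r - t) • A)).mulVec (γ t - γ r)‖
        ≤ (m⁻¹ * ‖M‖ * K * B) * Real.exp (-β * (t - r)) := by
    intro r hr0 hrt B hB hγB
    have h1 : ‖A * NormedSpace.exp ((r - t) • A)‖ ≤ m⁻¹ * ‖M‖ * (K * Real.exp (-β * (t - r))) := by
      calc ‖A * NormedSpace.exp ((r - t) • A)‖ ≤ ‖A‖ * ‖NormedSpace.exp ((r - t) • A)‖ := norm_mul_le _ _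
        _ ≤ m⁻¹ * ‖M‖ * (K * Real.exp (-β * (t - r))) := by
            rw [hnA]
            refine mul_le_mul_of_nonneg_left ?_
              (mul_nonneg (inv_nonneg.2 hm0.le) hnM)
            rw [show r - t = -(t - r) by ring]
            exact hdecayA (t - r) (by linarith)
    calc ‖(A * NormedSpace.exp ((r - t) • A)).mulVec (γ t - γ r)‖
        ≤ ‖A * NormedSpace.exp ((r - t) • A)‖ * ‖γ t - γ r‖ := Matrix.linfty_opNorm_mulVec _ _
      _ ≤ (m⁻¹ * ‖M‖ * (K * Real.exp (-β * (t - r)))) * B :=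
          mul_le_mul h1 hγB (norm_nonneg _)
            (mul_nonneg (mul_nonneg (inv_nonneg.2 hm0.le) hnM)
              (mul_nonneg hK.le (Real.exp_pos _).le))
      _ = (m⁻¹ * ‖M‖ * K * B) * Real.exp (-β * (t - r)) := by ring
  -- generic integral bound
  have hIbound : ∀ a b B : ℝ, 0 ≤ B → a ∈ Icc (0:ℝ) t → b ∈ Icc (0:ℝ) t → a ≤ b →
      (∀ r ∈ Icc a b, ‖γ t - γ r‖ ≤ B) →
      ‖∫ r in a..b, (A * NormedSpace.exp ((r - t) • A)).mulVec (γ t - γ r)‖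
        ≤ (m⁻¹ * ‖M‖ * K * B) *
          ((Real.exp (-β * (t - b)) - Real.exp (-β * (t - a))) / β) := by
    intro a b B hB ha hb hab hbnd
    have hc : (0:ℝ) ≤ m⁻¹ * ‖M‖ * K * B :=
      mul_nonneg (mul_nonneg (mul_nonneg (inv_nonneg.2 hm0.le) hnM) hK.le) hB
    have hae : ∀ᵐ r ∂(volume.restrict (uIoc a b)),
        ‖(A * NormedSpace.exp ((r - t) • A)).mulVec (γ t - γ r)‖
          ≤ (m⁻¹ * ‖M‖ * K * B) * Real.exp (-β * (t - r)) := by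
      filter_upwards [ae_restrict_mem measurableSet_uIoc] with r hr
      rw [uIoc_of_le hab] at hr
      exact hpt r (ha.1.trans hr.1.le) (hr.2.trans hb.2) B hB
        (hbnd r ⟨hr.1.le, hr.2⟩)
    have hgInt : IntervalIntegrable
        (fun r => (m⁻¹ * ‖M‖ * K * B) * Real.exp (-β * (t - r))) volume a b := by
      apply Continuous.intervalIntegrable
      continuity
    have h := intervalIntegral.norm_integral_le_abs_of_norm_le hae hgInt
    have hX : (0:ℝ) ≤ (Real.exp (-β * (t - b)) - Real.exp (-β * (t - a))) / β := by
      apply div_nonneg _ hβ.le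
      have := Real.exp_le_exp.2 (show -β * (t - a) ≤ -β * (t - b) by nlinarith)
      linarith
    refine h.trans ?_
    rw [intervalIntegral.integral_const_mul, expInt β t a b hβ,
      abs_of_nonneg (mul_nonneg hc hX)]
  -- bound on [0, s]
  have hI1 : ‖∫ r in (0:ℝ)..s, (A * NormedSpace.exp ((r - t) • A)).mulVec (γ t - γ r)‖
      ≤ K * ‖M‖ * Hγ * T ^ α / lam * Real.exp (-lam * δ / m) := by
    have hc' : (0:ℝ) ≤ K * ‖M‖ * Hγ * T ^ α / lam :=
      div_nonneg (mul_nonneg (mul_nonneg (mul_nonneg hK.le hnM) hHγ) hTα0) hlam.le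
    rcases eq_or_lt_of_le hs0 with h | h
    · rw [← h, intervalIntegral.integral_same, norm_zero]
      exact mul_nonneg hc' hEδ0.le
    · have hs : s = t - δ := by
        rcases max_cases (t - δ) 0 with ⟨h1, _⟩ | ⟨h1, _⟩
        · exact h1
        · rw [← hsdef] at h1; linarith
      have hb : ∀ r ∈ Icc (0:ℝ) s, ‖γ t - γ r‖ ≤ Hγ * T ^ α := by
        intro r hr
        have hrT : r ∈ Icc (0:ℝ) T := ⟨hr.1, le_trans (le_trans hr.2 hst) htT⟩
        refine (hγ r hrT t ⟨ht0, htT⟩).trans (mul_le_mul_of_nonneg_left ?_ hHγ)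
        apply Real.rpow_le_rpow (abs_nonneg _) _ hα0.le
        rw [abs_of_nonneg (by linarith [hr.2, hst] : (0:ℝ) ≤ t - r)]
        linarith [hr.1]
      have h2 := hIbound 0 s (Hγ * T ^ α) (mul_nonneg hHγ hTα0)
        ⟨le_rfl, ht0⟩ ⟨hs0, hst⟩ hs0 hb
      refine h2.trans ?_
      have e1 : t - s = δ := by rw [hs]; ring
      rw [e1, sub_zero]
      have e2 : -β * δ = -lam * δ / m := by rw [hβdef]; ring
      rw [e2]
      have hc : (0:ℝ) ≤ m⁻¹ * ‖M‖ * K * (Hγ * T ^ α) :=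
        mul_nonneg (mul_nonneg (mul_nonneg (inv_nonneg.2 hm0.le) hnM) hK.le)
          (mul_nonneg hHγ hTα0)
      have step1 : (Real.exp (-lam * δ / m) - Real.exp (-β * t)) / β
          ≤ Real.exp (-lam * δ / m) / β :=
        (div_le_div_iff_of_pos_right hβ).2 (by linarith [Real.exp_pos (-β * t)])
      refine (mul_le_mul_of_nonneg_left step1 hc).trans_eq ?_
      rw [hβdef]
      field_simp
  -- bound on [s, t]
  have hI2 : ‖∫ r in s..t, (A * NormedSpace.exp ((r - t) • A)).mulVec (γ t - γ r)‖
      ≤ K * ‖M‖ * Hγ / lam * δ ^ α := by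
    have hb : ∀ r ∈ Icc s t, ‖γ t - γ r‖ ≤ Hγ * δ ^ α := by
      intro r hr
      have hrT : r ∈ Icc (0:ℝ) T := ⟨le_trans hs0 hr.1, le_trans hr.2 htT⟩
      refine (hγ r hrT t ⟨ht0, htT⟩).trans (mul_le_mul_of_nonneg_left ?_ hHγ)
      apply Real.rpow_le_rpow (abs_nonneg _) _ hα0.le
      rw [abs_of_nonneg (by linarith [hr.2] : (0:ℝ) ≤ t - r)]
      linarith [hr.1, hstδ]
    have h2 := hIbound s t (Hγ * δ ^ α) (mul_nonneg hHγ hP0)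
      ⟨hs0, hst⟩ ⟨ht0, le_rfl⟩ hst hb
    refine h2.trans ?_
    rw [sub_self, mul_zero, Real.exp_zero]
    have hc : (0:ℝ) ≤ m⁻¹ * ‖M‖ * K * (Hγ * δ ^ α) :=
      mul_nonneg (mul_nonneg (mul_nonneg (inv_nonneg.2 hm0.le) hnM) hK.le)
        (mul_nonneg hHγ hP0)
    have step1 : (1 - Real.exp (-β * (t - s))) / β ≤ 1 / β :=
      (div_le_div_iff_of_pos_right hβ).2 (by linarith [Real.exp_pos (-β * (t - s))])
    refine (mul_le_mul_of_nonneg_left step1 hc).trans_eq ?_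
    rw [hβdef]
    field_simp
  -- bound on the boundary term
  have hγt : ‖γ t‖ ≤ Hγ * t ^ α := by
    have h := hγ 0 ⟨le_rfl, by linarith⟩ t ⟨ht0, htT⟩
    simpa [hγ0, abs_of_nonneg ht0] using h
  have h0 : ‖(NormedSpace.exp ((-t) • A)).mulVec (γ t)‖
      ≤ K * Hγ * T ^ α * Real.exp (-lam * δ / m) + K * Hγ * δ ^ α := by
    have hb := Matrix.linfty_opNorm_mulVec (NormedSpace.exp ((-t) • A)) (γ t)
    have h1 : ‖NormedSpace.exp ((-t) • A)‖ * ‖γ t‖ ≤ (K * Real.exp (-β * t)) * (Hγ * t ^ α) :=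
      mul_le_mul (hdecayA t ht0) hγt (norm_nonneg _)
        (mul_nonneg hK.le (Real.exp_pos _).le)
    have htα0 : (0:ℝ) ≤ t ^ α := Real.rpow_nonneg ht0 α
    rcases le_or_gt δ t with h | h
    · have e1 : Real.exp (-β * t) ≤ Real.exp (-lam * δ / m) := by
        apply Real.exp_le_exp.2
        rw [hβdef, show -(lam / m) * t = -(lam * t) / m by ring,
          show -lam * δ / m = -(lam * δ) / m by ring]
        exact (div_le_div_iff_of_pos_right hm0).2 (by nlinarith)
      have e2 : t ^ α ≤ T ^ α := Real.rpow_le_rpow ht0 htT hα0.le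
      have h2 : (K * Real.exp (-β * t)) * (Hγ * t ^ α)
          ≤ (K * Real.exp (-lam * δ / m)) * (Hγ * T ^ α) :=
        mul_le_mul (mul_le_mul_of_nonneg_left e1 hK.le)
          (mul_le_mul_of_nonneg_left e2 hHγ) (mul_nonneg hHγ htα0)
          (mul_nonneg hK.le hEδ0.le)
      have h3 : (0:ℝ) ≤ K * Hγ * δ ^ α := mul_nonneg (mul_nonneg hK.le hHγ) hP0
      nlinarith [hb.trans (h1.trans h2)]
    · have e1 : Real.exp (-β * t) ≤ 1 :=
        Real.exp_le_one_iff.2 (by nlinarith)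
      have e2 : t ^ α ≤ δ ^ α := Real.rpow_le_rpow ht0 h.le hα0.le
      have h2 : (K * Real.exp (-β * t)) * (Hγ * t ^ α) ≤ (K * 1) * (Hγ * δ ^ α) :=
        mul_le_mul (mul_le_mul_of_nonneg_left e1 hK.le)
          (mul_le_mul_of_nonneg_left e2 hHγ) (mul_nonneg hHγ htα0)
          (by linarith)
      have h3 : (0:ℝ) ≤ K * Hγ * T ^ α * Real.exp (-lam * δ / m) :=
        mul_nonneg (mul_nonneg (mul_nonneg hK.le hHγ) hTα0) hEδ0.le
      nlinarith [hb.trans (h1.trans h2)]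
  -- combine
  have tri : ‖(NormedSpace.exp ((-t) • A)).mulVec (γ t)
        + ((∫ r in (0:ℝ)..s, (A * NormedSpace.exp ((r - t) • A)).mulVec (γ t - γ r))
          + ∫ r in s..t, (A * NormedSpace.exp ((r - t) • A)).mulVec (γ t - γ r))‖
      ≤ ‖(NormedSpace.exp ((-t) • A)).mulVec (γ t)‖
        + (‖∫ r in (0:ℝ)..s, (A * NormedSpace.exp ((r - t) • A)).mulVec (γ t - γ r)‖
          + ‖∫ r in s..t, (A * NormedSpace.exp ((r - t) • A)).mulVec (γ t - γ r)‖) :=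
    (norm_add_le _ _).trans (add_le_add_right (norm_add_le _ _) _)
  have hW : (0:ℝ) ≤ ‖M‖ / lam := div_nonneg hnM hlam.le
  have final := add_le_add h0 (add_le_add hI1 hI2)
  refine (tri.trans final).trans ?_
  have q1 : (0:ℝ) ≤ K * Hγ * T ^ α * δ ^ α :=
    mul_nonneg (mul_nonneg (mul_nonneg hK.le hHγ) hTα0) hP0
  have q2 : (0:ℝ) ≤ K * Hγ * Real.exp (-lam * δ / m) :=
    mul_nonneg (mul_nonneg hK.le hHγ) hEδ0.le
  have q3 : (0:ℝ) ≤ K * Hγ * (‖M‖ / lam) * T ^ α * δ ^ α :=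
    mul_nonneg (mul_nonneg (mul_nonneg (mul_nonneg hK.le hHγ) hW) hTα0) hP0
  have q4 : (0:ℝ) ≤ K * Hγ * (‖M‖ / lam) * Real.exp (-lam * δ / m) :=
    mul_nonneg (mul_nonneg (mul_nonneg hK.le hHγ) hW) hEδ0.le
  have hdiv1 : K * ‖M‖ * Hγ * T ^ α / lam = K * Hγ * (‖M‖ / lam) * T ^ α := by
    ring
  have hdiv2 : K * ‖M‖ * Hγ / lam = K * Hγ * (‖M‖ / lam) := by
    ring
  rw [hdiv1, hdiv2]
  nlinarith [q1, q2, q3, q4]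


set_option maxHeartbeats 1000000 in
/-- For `z(t) = ∫₀ᵗ e^{-(M/m)(t-r)} dγ(r)` with `γ` an `α`-Hölder
path, `γ(0) = 0`, one has `|z(t)| ≤ c (e^{-λδ/m} + δ^α)` for all `0 < δ ≤ t ≤ T`, with
`c` independent of `m ∈ (0,1]`; in particular `|z(t)| ≤ c m^α (1 + |log m|)^α`.
(The Young integral defining `z` is encoded via integration by parts, using `γ(0)=0`:
`z(t) = γ(t) - ∫₀ᵗ (M/m) e^{-(M/m)(t-r)} γ(r) dr`.) -/
theorem stmt11 (n : ℕ) (M : Matrix (Fin n) (Fin n) ℝ) (K lam : ℝ)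
    (hK : 0 < K) (hlam : 0 < lam)
    (hdecay : ∀ τ : ℝ, 0 ≤ τ → ‖NormedSpace.exp (-τ • M)‖ ≤ K * Real.exp (-lam * τ))
    (T : ℝ) (hT : 0 < T) (α : ℝ) (hα : α ∈ Ioc (0:ℝ) 1)
    (γ : ℝ → (Fin n → ℝ)) (hγ0 : γ 0 = 0) (Hγ : ℝ)
    (hγ : ∀ s ∈ Icc (0:ℝ) T, ∀ t ∈ Icc (0:ℝ) T, ‖γ t - γ s‖ ≤ Hγ * |t - s| ^ α) :
    ∃ c : ℝ, ∀ m ∈ Ioc (0:ℝ) 1, ∀ z : ℝ → (Fin n → ℝ),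
      (∀ t ∈ Icc (0:ℝ) T,
        z t = γ t - ∫ r in (0:ℝ)..t, ((m⁻¹ • M) * NormedSpace.exp (-((t - r) / m) • M)).mulVec (γ r)) →
      (∀ t ∈ Icc (0:ℝ) T, ∀ δ : ℝ, 0 < δ → δ ≤ t →
          ‖z t‖ ≤ c * (Real.exp (-lam * δ / m) + δ ^ α)) ∧
        (∀ t ∈ Icc (0:ℝ) T, ‖z t‖ ≤ c * m ^ α * (1 + |Real.log m|) ^ α) := by
  obtain ⟨hα0, hα1⟩ := hα
  have hTα0 : (0:ℝ) < T ^ α := Real.rpow_pos_of_pos hT α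
  have hHγ : 0 ≤ Hγ := by
    have h := hγ 0 ⟨le_rfl, hT.le⟩ T ⟨hT.le, le_rfl⟩
    have h2 : (0:ℝ) ≤ Hγ * |T - 0| ^ α := le_trans (norm_nonneg _) h
    rw [sub_zero, abs_of_pos hT] at h2
    nlinarith
  set C1 := K * Hγ * (T ^ α + 1) * (1 + ‖M‖ / lam) with hC1
  have hW : (0:ℝ) ≤ ‖M‖ / lam := div_nonneg (norm_nonneg M) hlam.le
  have hC1nn : 0 ≤ C1 := by
    apply mul_nonneg (mul_nonneg (mul_nonneg hK.le hHγ) (by linarith))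
    linarith
  have hq : (0:ℝ) < (α / lam) ^ α := Real.rpow_pos_of_pos (div_pos hα0 hlam) α
  refine ⟨C1 * (1 + (α / lam) ^ α), ?_⟩
  intro m hm z hz
  obtain ⟨hm0, hm1⟩ := hm
  have key : ∀ t ∈ Icc (0:ℝ) T, ∀ δ : ℝ, 0 < δ →
      ‖z t‖ ≤ C1 * (Real.exp (-lam * δ / m) + δ ^ α) := by
    intro t ht δ hδ
    rw [hz t ht]
    exact keyBound n M K lam hK hlam hdecay T hT α hα0 hα1 γ hγ0 Hγ hHγ hγ m hm0 hm1
      t ht.1 ht.2 δ hδ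
  constructor
  · intro t ht δ hδ _
    have h := key t ht δ hδ
    have hX : 0 ≤ Real.exp (-lam * δ / m) + δ ^ α := by
      have h1 := Real.exp_pos (-lam * δ / m)
      have h2 := Real.rpow_nonneg hδ.le α
      linarith
    have h3 : C1 * (Real.exp (-lam * δ / m) + δ ^ α)
        ≤ C1 * (1 + (α / lam) ^ α) * (Real.exp (-lam * δ / m) + δ ^ α) := by
      apply mul_le_mul_of_nonneg_right _ hX
      nlinarith
    linarith
  · intro t ht
    set L := 1 + |Real.log m| with hLdef
    have hL1 : 1 ≤ L := by
      have := abs_nonneg (Real.log m); rw [hLdef]; linarith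
    have hL0 : (0:ℝ) < L := by linarith
    set δ := α / lam * (m * L) with hδdef
    have hδ0 : 0 < δ := mul_pos (div_pos hα0 hlam) (mul_pos hm0 hL0)
    have h := key t ht δ hδ0
    have hmα : (0:ℝ) < m ^ α := Real.rpow_pos_of_pos hm0 α
    have hLα1 : 1 ≤ L ^ α := Real.one_le_rpow hL1 hα0.le
    have hexp : Real.exp (-lam * δ / m) ≤ m ^ α * L ^ α := by
      have e1 : -lam * δ / m = -(α * L) := by
        rw [hδdef]; field_simp
      rw [e1]
      have hlogm : |Real.log m| = -Real.log m :=
        abs_of_nonpos (Real.log_nonpos hm0.le hm1)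
      have e2 : Real.exp (-(α * L)) = Real.exp (-α) * m ^ α := by
        rw [hLdef, hlogm, show -(α * (1 + -Real.log m)) = -α + Real.log m * α by ring,
          Real.exp_add, Real.rpow_def_of_pos hm0]
      rw [e2]
      calc Real.exp (-α) * m ^ α ≤ 1 * m ^ α := by
            apply mul_le_mul_of_nonneg_right _ hmα.le
            exact Real.exp_le_one_iff.2 (by linarith)
        _ = m ^ α := one_mul _
        _ ≤ m ^ α * L ^ α := le_mul_of_one_le_right hmα.le hLα1
    have hδα : δ ^ α = (α / lam) ^ α * (m ^ α * L ^ α) := by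
      rw [hδdef, Real.mul_rpow (div_pos hα0 hlam).le (mul_pos hm0 hL0).le,
        Real.mul_rpow hm0.le hL0.le]
    have hLα0 : (0:ℝ) ≤ L ^ α := by linarith
    refine h.trans ?_
    rw [hδα]
    nlinarith [mul_le_mul_of_nonneg_left hexp hC1nn, mul_nonneg hmα.le hLα0]
end

section
/- Let M be an n×n real matrix with ‖e^{-τM}‖ ≤ K e^{-λτ}, λ > 0. Let γ : [0,T] → ℝⁿ be α-Hölder, α ∈ (0,1], and let z solve dz = -(M/m)z dt + dγ, z(0)=0. Then for each β < α, z converges to 0 in β-Hölder norm on [0,T] as m → 0; i.e., sup_{s≠t} |z(t)-z(s)|/|t-s|^β → 0. -/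
open MeasureTheory Matrix Set NormedSpace intervalIntegral

attribute [local instance] Matrix.linftyOpNormedAddCommGroup Matrix.linftyOpNormedSpace
  Matrix.linftyOpNormedRing Matrix.linftyOpNormedAlgebra

/-! ### Scalar auxiliary lemmas -/

lemma stmt12_rpow_le_exp {u α : ℝ} (hu : 0 ≤ u) (hα0 : 0 ≤ α) (hα1 : α ≤ 1) :
    u ^ α ≤ Real.exp u := by
  rcases le_or_gt u 1 with h | h
  · exact (Real.rpow_le_one hu h hα0).trans (Real.one_le_exp hu)
  · calc u ^ α ≤ u ^ (1:ℝ) := Real.rpow_le_rpow_of_exponent_le h.le hα1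
      _ = u := Real.rpow_one u
      _ ≤ Real.exp u := by linarith [Real.add_one_le_exp u]

lemma stmt12_decay_rpow {c u α : ℝ} (hc : 0 < c) (hu : 0 ≤ u) (hα0 : 0 ≤ α) (hα1 : α ≤ 1) :
    Real.exp (-(c*u)) * u ^ α ≤ (c⁻¹) ^ α := by
  have hcu : 0 ≤ c * u := by positivity
  have h1 : (c*u) ^ α ≤ Real.exp (c*u) := stmt12_rpow_le_exp hcu hα0 hα1
  have h2 : u ^ α = c⁻¹ ^ α * (c*u) ^ α := by
    rw [← Real.mul_rpow (by positivity) hcu]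
    congr 1; field_simp
  have h3 : (Real.exp (c*u))⁻¹ * (c*u) ^ α ≤ 1 := by
    calc (Real.exp (c*u))⁻¹ * (c*u) ^ α ≤ (Real.exp (c*u))⁻¹ * Real.exp (c*u) := by gcongr
      _ = 1 := inv_mul_cancel₀ (Real.exp_pos _).ne'
  rw [h2, Real.exp_neg]
  calc (Real.exp (c*u))⁻¹ * (c⁻¹ ^ α * (c*u) ^ α)
      = c⁻¹ ^ α * ((Real.exp (c*u))⁻¹ * (c*u) ^ α) := by ring
    _ ≤ c⁻¹ ^ α * 1 := by gcongr
    _ = c⁻¹ ^ α := mul_one _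

lemma stmt12_key_pointwise {m lam u α : ℝ} (hm : 0 < m) (hlam : 0 < lam) (hu : 0 ≤ u)
    (hα0 : 0 ≤ α) (hα1 : α ≤ 1) :
    Real.exp (-lam * (u/m)) * u ^ α ≤ (2*m/lam) ^ α * Real.exp (-(lam/(2*m)*u)) := by
  have he : -lam * (u/m) = -(lam/(2*m)*u) + -(lam/(2*m)*u) := by field_simp; ring
  have hd := stmt12_decay_rpow (c := lam/(2*m)) (u := u) (by positivity) hu hα0 hα1
  have hinv : ((lam/(2*m))⁻¹ : ℝ) = 2*m/lam := by field_simp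
  rw [he, Real.exp_add]
  calc Real.exp (-(lam/(2*m)*u)) * Real.exp (-(lam/(2*m)*u)) * u ^ α
      = (Real.exp (-(lam/(2*m)*u)) * u ^ α) * Real.exp (-(lam/(2*m)*u)) := by ring
    _ ≤ (2*m/lam) ^ α * Real.exp (-(lam/(2*m)*u)) := by
        rw [← hinv]; gcongr

lemma stmt12_exp_integral_scalar {c : ℝ} (hc : 0 < c) (a b : ℝ) :
    ∫ r in a..b, Real.exp (-(c*(b - r))) = (1 - Real.exp (-(c*(b-a))))/c := by
  have hd : ∀ r ∈ uIcc a b, HasDerivAt (fun x => Real.exp (-(c*(b - x)))/c)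
      (Real.exp (-(c*(b - r)))) r := by
    intro r _
    have h2 : HasDerivAt (fun x : ℝ => -(c*(b - x))) c r := by
      have : (fun x : ℝ => -(c*(b - x))) = fun x => c * x + (-(c*b)) := by funext x; ring
      rw [this]; simpa using ((hasDerivAt_id r).const_mul c).add_const (-(c*b))
    have := (Real.hasDerivAt_exp (-(c*(b - r)))).comp r h2
    have h3 := this.div_const c
    rw [mul_div_assoc, div_self hc.ne', mul_one] at h3
    exact h3
  have hint : IntervalIntegrable (fun r => Real.exp (-(c*(b - r)))) volume a b :=
    (Real.continuous_exp.comp (by fun_prop)).intervalIntegrable a b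
  rw [intervalIntegral.integral_eq_sub_of_hasDerivAt hd hint]
  field_simp
  simp

/-! ### Matrix auxiliary lemmas -/

section MatrixAux

variable {n : ℕ} (M : Matrix (Fin n) (Fin n) ℝ)

lemma stmt12_contOn_mulVec {X : Type*} [TopologicalSpace X] {B : X → Matrix (Fin n) (Fin n) ℝ}
    {g : X → Fin n → ℝ} {s : Set X} (hB : ContinuousOn B s) (hg : ContinuousOn g s) :
    ContinuousOn (fun x => (B x).mulVec (g x)) s := by
  apply continuousOn_pi.2; intro i
  simp only [Matrix.mulVec, dotProduct]
  apply continuousOn_finset_sum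
  intro j _
  exact (((continuous_apply j).comp_continuousOn ((continuous_apply i).comp_continuousOn hB)).mul
    ((continuous_apply j).comp_continuousOn hg))

lemma stmt12_cont_matrixpart (m t : ℝ) :
    Continuous (fun r : ℝ => (m⁻¹ • M) * exp (-((t - r)/m) • M)) :=
  continuous_const.mul (exp_continuous.comp
    (((continuous_const.sub continuous_id).div_const m).neg.smul continuous_const))

lemma stmt12_expderiv {m : ℝ} (hm : 0 < m) (t r : ℝ) :
    HasDerivAt (fun r : ℝ => exp (-((t - r)/m) • M))
      ((m⁻¹ • M) * exp (-((t - r)/m) • M)) r := by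
  have h1 : ∀ x : ℝ, -((t - x)/m) = (1/m) * x + (-t/m) := by intro x; field_simp; ring
  have h2 : HasDerivAt (fun x : ℝ => -((t - x)/m)) (1/m) r := by
    rw [show (fun x : ℝ => -((t - x)/m)) = fun x => (1/m) * x + (-t/m) from funext h1]
    simpa using ((hasDerivAt_id r).const_mul (1/m)).add_const (-t/m)
  have h3 := (hasDerivAt_exp_smul_const' (𝕂 := ℝ) M (-((t - r)/m))).scomp r h2
  rw [show ((m⁻¹ • M) * exp (-((t - r)/m) • M)) = (1/m) • (M * exp (-((t - r)/m) • M)) by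
    rw [smul_mul_assoc, one_div]]
  exact h3

lemma stmt12_ftc_exp {m : ℝ} (hm : 0 < m) (t s : ℝ) :
    ∫ r in s..t, (m⁻¹ • M) * exp (-((t - r)/m) • M)
      = 1 - exp (-((t - s)/m) • M) := by
  have := intervalIntegral.integral_eq_sub_of_hasDerivAt
    (f := fun r : ℝ => exp (-((t - r)/m) • M)) (fun r _ => stmt12_expderiv M hm t r)
    ((stmt12_cont_matrixpart M m t).intervalIntegrable s t)
  rw [this]
  norm_num [NormedSpace.exp_zero]

lemma stmt12_integral_mulVec_comm {B : ℝ → Matrix (Fin n) (Fin n) ℝ} (v : Fin n → ℝ)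
    {a b : ℝ} (hB : @IntervalIntegrable _ _ NormedAddGroup.toENormedAddMonoid B MeasureTheory.volume a b) :
    ∫ r in a..b, (B r).mulVec v = (∫ r in a..b, B r).mulVec v := by
  let L : Matrix (Fin n) (Fin n) ℝ →ₗ[ℝ] (Fin n → ℝ) :=
    { toFun := fun A => A.mulVec v
      map_add' := fun A B => Matrix.add_mulVec A B v
      map_smul' := fun c A => Matrix.smul_mulVec c A v }
  exact L.toContinuousLinearMap.intervalIntegral_comp_comm hB

lemma stmt12_mulVec_integral_comm (F : Matrix (Fin n) (Fin n) ℝ) {g : ℝ → Fin n → ℝ}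
    {a b : ℝ} (hg : IntervalIntegrable g MeasureTheory.volume a b) :
    F.mulVec (∫ r in a..b, g r) = ∫ r in a..b, F.mulVec (g r) := by
  simpa using ((Matrix.mulVecLin F).toContinuousLinearMap.intervalIntegral_comp_comm hg).symm

lemma stmt12_exp_split {m : ℝ} (hm : 0 < m) (r s t : ℝ) :
    (m⁻¹ • M) * exp (-((t - r)/m) • M)
      = exp (-((t - s)/m) • M) * ((m⁻¹ • M) * exp (-((s - r)/m) • M)) := by
  have hcomm : Commute ((-((t - s)/m)) • M) ((-((s - r)/m)) • M) :=
    ((Commute.refl M).smul_left _).smul_right _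
  have hadd : (-((t - r)/m)) • M = (-((t - s)/m)) • M + (-((s - r)/m)) • M := by
    rw [← add_smul]; congr 1; field_simp; ring
  rw [hadd, Matrix.exp_add_of_commute _ _ hcomm]
  have hcM : Commute (exp ((-((t - s)/m)) • M)) (m⁻¹ • M) :=
    (((Commute.refl M).smul_left _).smul_right _).exp_left
  rw [← mul_assoc, ← hcM.eq, mul_assoc]

lemma stmt12_exp_sub_one {K lam : ℝ} (hK : 0 < K) (hlam : 0 < lam)
    (hdecay : ∀ τ : ℝ, 0 ≤ τ → ‖exp (-τ • M)‖ ≤ K * Real.exp (-lam * τ))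
    {u : ℝ} (hu : 0 ≤ u) :
    ‖exp (-u • M) - 1‖ ≤ K * ‖M‖ * u := by
  have hderiv : ∀ v ∈ Icc (0:ℝ) u, HasDerivWithinAt (fun v : ℝ => exp (-v • M))
      ((-1 : ℝ) • (M * exp (-v • M))) (Icc 0 u) v := by
    intro v _
    have h2 : HasDerivAt (fun x : ℝ => -x) (-1 : ℝ) v := by
      simpa using hasDerivAt_neg v
    exact (((hasDerivAt_exp_smul_const' (𝕂 := ℝ) M (-v)).scomp v h2)).hasDerivWithinAt
  have hbound : ∀ v ∈ Icc (0:ℝ) u, ‖(-1 : ℝ) • (M * exp (-v • M))‖ ≤ K * ‖M‖ := by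
    intro v hv
    rw [neg_one_smul, norm_neg]
    calc ‖M * exp (-v • M)‖ ≤ ‖M‖ * ‖exp (-v • M)‖ := norm_mul_le _ _
      _ ≤ ‖M‖ * (K * Real.exp (-lam * v)) := by
          gcongr; exact hdecay v hv.1
      _ ≤ ‖M‖ * (K * 1) := by
          gcongr
          exact Real.exp_le_one_iff.2 (by nlinarith [hv.1])
      _ = K * ‖M‖ := by ring
  have := (convex_Icc (0:ℝ) u).norm_image_sub_le_of_norm_hasDerivWithin_le hderiv hbound
    (left_mem_Icc.2 hu) (right_mem_Icc.2 hu)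
  simpa [NormedSpace.exp_zero, Real.norm_eq_abs, abs_of_nonneg hu] using this

end MatrixAux

/-! ### Core estimates -/

section Core

variable {n : ℕ} {M : Matrix (Fin n) (Fin n) ℝ} {K lam T α Hγ : ℝ}
  {γ : ℝ → (Fin n → ℝ)}

lemma stmt12_Hγ_nonneg (hT : 0 < T) (hα : α ∈ Ioc (0:ℝ) 1) (hγ0 : γ 0 = 0)
    (hγ : ∀ s ∈ Icc (0:ℝ) T, ∀ t ∈ Icc (0:ℝ) T, ‖γ t - γ s‖ ≤ Hγ * |t - s| ^ α) :
    0 ≤ Hγ := by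
  have h := hγ 0 (left_mem_Icc.2 hT.le) T (right_mem_Icc.2 hT.le)
  have h2 : (0:ℝ) < |T - 0| ^ α := by
    rw [sub_zero, abs_of_pos hT]; exact Real.rpow_pos_of_pos hT α
  nlinarith [norm_nonneg (γ T - γ 0)]

lemma stmt12_gamma_contOn (hα : α ∈ Ioc (0:ℝ) 1)
    (hγ : ∀ s ∈ Icc (0:ℝ) T, ∀ t ∈ Icc (0:ℝ) T, ‖γ t - γ s‖ ≤ Hγ * |t - s| ^ α) :
    ContinuousOn γ (Icc 0 T) := by
  intro x hx
  rw [ContinuousWithinAt, tendsto_iff_dist_tendsto_zero]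
  have habs : Filter.Tendsto (fun t : ℝ => |t - x|) (nhdsWithin x (Icc 0 T)) (nhds 0) := by
    have : Filter.Tendsto (fun t : ℝ => |t - x|) (nhds x) (nhds 0) := by
      have hcont : Continuous (fun t : ℝ => |t - x|) :=
        (continuous_id.sub continuous_const).abs
      simpa using hcont.tendsto x
    exact this.mono_left nhdsWithin_le_nhds
  have hrpow : Filter.Tendsto (fun t : ℝ => Hγ * |t - x| ^ α) (nhdsWithin x (Icc 0 T))
      (nhds 0) := by
    have hc : ContinuousAt (fun y : ℝ => y ^ α) 0 :=
      Real.continuousAt_rpow_const 0 α (Or.inr hα.1.le)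
    have h2 := (hc.tendsto.comp habs)
    rw [Real.zero_rpow hα.1.ne'] at h2
    simpa using h2.const_mul Hγ
  apply squeeze_zero' (Filter.Eventually.of_forall (fun t => dist_nonneg)) _ hrpow
  filter_upwards [self_mem_nhdsWithin] with t ht
  rw [dist_eq_norm]
  exact hγ x hx t ht

lemma stmt12_integrable {m : ℝ} (hm : 0 < m) (hT : 0 < T) (t : ℝ)
    {g : ℝ → Fin n → ℝ} (hg : ContinuousOn g (Icc 0 T)) {a b : ℝ}
    (ha : a ∈ Icc (0:ℝ) T) (hb : b ∈ Icc (0:ℝ) T) :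
    IntervalIntegrable (fun r => ((m⁻¹ • M) * exp (-((t - r)/m) • M)).mulVec (g r))
      MeasureTheory.volume a b :=
  ((stmt12_contOn_mulVec ((stmt12_cont_matrixpart M m t).continuousOn) hg).mono
    (Set.uIcc_subset_Icc ha hb)).intervalIntegrable

lemma stmt12_normA (hK : 0 < K) (hlam : 0 < lam)
    (hdecay : ∀ τ : ℝ, 0 ≤ τ → ‖exp (-τ • M)‖ ≤ K * Real.exp (-lam * τ))
    {m : ℝ} (hm : 0 < m) {t r : ℝ} (htr : 0 ≤ t - r) (w : Fin n → ℝ) :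
    ‖((m⁻¹ • M) * exp (-((t - r)/m) • M)).mulVec w‖
      ≤ m⁻¹ * ‖M‖ * (K * Real.exp (-lam * ((t - r)/m))) * ‖w‖ := by
  calc ‖((m⁻¹ • M) * exp (-((t - r)/m) • M)).mulVec w‖
      ≤ ‖(m⁻¹ • M) * exp (-((t - r)/m) • M)‖ * ‖w‖ := Matrix.linfty_opNorm_mulVec _ _
    _ ≤ ‖(m⁻¹ • M)‖ * ‖exp (-((t - r)/m) • M)‖ * ‖w‖ := by
        gcongr; exact norm_mul_le _ _
    _ = m⁻¹ * ‖M‖ * ‖exp (-((t - r)/m) • M)‖ * ‖w‖ := by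
        rw [norm_smul, Real.norm_eq_abs, abs_of_pos (by positivity)]
    _ ≤ m⁻¹ * ‖M‖ * (K * Real.exp (-lam * ((t - r)/m))) * ‖w‖ := by
        gcongr
        exact hdecay _ (by positivity)

end Core

section Core2

variable {n : ℕ} {M : Matrix (Fin n) (Fin n) ℝ} {K lam T α Hγ : ℝ}
  {γ : ℝ → (Fin n → ℝ)}

lemma stmt12_zsup (hK : 0 < K) (hlam : 0 < lam)
    (hdecay : ∀ τ : ℝ, 0 ≤ τ → ‖exp (-τ • M)‖ ≤ K * Real.exp (-lam * τ))
    (hT : 0 < T) (hα : α ∈ Ioc (0:ℝ) 1) (hγ0 : γ 0 = 0)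
    (hγ : ∀ s ∈ Icc (0:ℝ) T, ∀ t ∈ Icc (0:ℝ) T, ‖γ t - γ s‖ ≤ Hγ * |t - s| ^ α)
    {m : ℝ} (hm : 0 < m) {z : ℝ → (Fin n → ℝ)}
    (hz : ∀ t ∈ Icc (0:ℝ) T,
      z t = γ t - ∫ r in (0:ℝ)..t, ((m⁻¹ • M) * exp (-((t - r) / m) • M)).mulVec (γ r)) :
    ∀ s ∈ Icc (0:ℝ) T,
      ‖z s‖ ≤ (K * Hγ * (2/lam) ^ α * (1 + ‖M‖ * (2/lam))) * m ^ α := by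
  intro s hs
  obtain ⟨hs0, hsT⟩ := hs
  have hγc : ContinuousOn γ (Icc 0 T) := stmt12_gamma_contOn hα hγ
  have hHγ : 0 ≤ Hγ := stmt12_Hγ_nonneg hT hα hγ0 hγ
  have h0mem : (0:ℝ) ∈ Icc (0:ℝ) T := left_mem_Icc.2 hT.le
  have hsmem : s ∈ Icc (0:ℝ) T := ⟨hs0, hsT⟩
  have hγcs : ContinuousOn (fun r => γ r - γ s) (Icc 0 T) := hγc.sub continuousOn_const
  have hint2 : IntervalIntegrable
      (fun r => ((m⁻¹ • M) * exp (-((s - r) / m) • M)).mulVec (γ r - γ s))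
      MeasureTheory.volume 0 s := stmt12_integrable hm hT s hγcs h0mem hsmem
  have hint3 : IntervalIntegrable
      (fun r => ((m⁻¹ • M) * exp (-((s - r) / m) • M)).mulVec (γ s))
      MeasureTheory.volume 0 s := stmt12_integrable hm hT s continuousOn_const h0mem hsmem
  have hintA : @IntervalIntegrable _ _ NormedAddGroup.toENormedAddMonoid (fun r => (m⁻¹ • M) * exp (-((s - r) / m) • M))
      MeasureTheory.volume 0 s := (stmt12_cont_matrixpart M m s).intervalIntegrable 0 s
  -- decompose the integral
  have heq1 : (∫ r in (0:ℝ)..s, ((m⁻¹ • M) * exp (-((s - r) / m) • M)).mulVec (γ r))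
      = (∫ r in (0:ℝ)..s, ((m⁻¹ • M) * exp (-((s - r) / m) • M)).mulVec (γ r - γ s))
        + ∫ r in (0:ℝ)..s, ((m⁻¹ • M) * exp (-((s - r) / m) • M)).mulVec (γ s) := by
    rw [← intervalIntegral.integral_add hint2 hint3]
    congr 1
    funext r
    rw [Matrix.mulVec_sub]
    abel
  have heq2 : (∫ r in (0:ℝ)..s, ((m⁻¹ • M) * exp (-((s - r) / m) • M)).mulVec (γ s))
      = ((1 : Matrix (Fin n) (Fin n) ℝ) - exp (-(s / m) • M)).mulVec (γ s) := by
    rw [stmt12_integral_mulVec_comm (γ s) hintA, stmt12_ftc_exp M hm s 0]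
    norm_num
  have hzs : z s = (exp (-(s / m) • M)).mulVec (γ s)
      - ∫ r in (0:ℝ)..s, ((m⁻¹ • M) * exp (-((s - r) / m) • M)).mulVec (γ r - γ s) := by
    rw [hz s hsmem, heq1, heq2, Matrix.sub_mulVec, Matrix.one_mulVec]
    abel
  -- bound the first term
  have hnγs : ‖γ s‖ ≤ Hγ * s ^ α := by
    have := hγ 0 h0mem s hsmem
    rwa [hγ0, sub_zero, sub_zero, abs_of_nonneg hs0] at this
  have hterm1 : ‖(exp (-(s / m) • M)).mulVec (γ s)‖ ≤ K * Hγ * (2*m/lam) ^ α := by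
    calc ‖(exp (-(s / m) • M)).mulVec (γ s)‖
        ≤ ‖exp (-(s / m) • M)‖ * ‖γ s‖ := Matrix.linfty_opNorm_mulVec _ _
      _ ≤ (K * Real.exp (-lam * (s/m))) * (Hγ * s ^ α) := by
          apply mul_le_mul (hdecay _ (by positivity)) hnγs (norm_nonneg _) (by positivity)
      _ = (K * Hγ) * (Real.exp (-lam * (s/m)) * s ^ α) := by ring
      _ ≤ (K * Hγ) * ((2*m/lam) ^ α * Real.exp (-(lam/(2*m)*s))) :=
          mul_le_mul_of_nonneg_left
            (stmt12_key_pointwise hm hlam hs0 hα.1.le hα.2) (by positivity)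
      _ ≤ (K * Hγ) * ((2*m/lam) ^ α * 1) :=
          mul_le_mul_of_nonneg_left
            (mul_le_mul_of_nonneg_left
              (Real.exp_le_one_iff.2 (neg_nonpos.2 (by positivity))) (by positivity))
            (by positivity)
      _ = K * Hγ * (2*m/lam) ^ α := by ring
  -- bound the integral term
  set c0 : ℝ := m⁻¹ * ‖M‖ * K * Hγ * (2*m/lam) ^ α with hc0
  have hc0nn : 0 ≤ c0 := by positivity
  have hgint : IntervalIntegrable (fun r => c0 * Real.exp (-(lam/(2*m)*(s - r))))
      MeasureTheory.volume 0 s :=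
    (continuous_const.mul (Real.continuous_exp.comp (by fun_prop))).intervalIntegrable 0 s
  have hterm2 : ‖∫ r in (0:ℝ)..s, ((m⁻¹ • M) * exp (-((s - r) / m) • M)).mulVec (γ r - γ s)‖
      ≤ c0 * (2*m/lam) := by
    have hb := intervalIntegral.norm_integral_le_of_norm_le (μ := MeasureTheory.volume)
      (f := fun r => ((m⁻¹ • M) * exp (-((s - r) / m) • M)).mulVec (γ r - γ s))
      (g := fun r => c0 * Real.exp (-(lam/(2*m)*(s - r)))) hs0 ?_ hgint
    · refine hb.trans ?_
      have hval : (∫ r in (0:ℝ)..s, c0 * Real.exp (-(lam/(2*m)*(s - r))))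
          = c0 * ((1 - Real.exp (-(lam/(2*m)*(s-0))))/(lam/(2*m))) := by
        rw [intervalIntegral.integral_const_mul, stmt12_exp_integral_scalar (by positivity)]
      rw [hval]
      · have h1 : (1 - Real.exp (-(lam/(2*m)*(s-0))))/(lam/(2*m)) ≤ (2*m/lam) := by
          rw [div_le_iff₀ (by positivity)]
          have := Real.exp_pos (-(lam/(2*m)*(s-0)))
          have h2 : (2*m/lam) * (lam/(2*m)) = 1 := by field_simp
          nlinarith
        exact mul_le_mul_of_nonneg_left h1 hc0nn
    · filter_upwards with r hr
      obtain ⟨hr0, hrs⟩ := hr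
      have hrmem : r ∈ Icc (0:ℝ) T := ⟨hr0.le, hrs.trans hsT⟩
      have hsr : (0:ℝ) ≤ s - r := by linarith
      have hγr : ‖γ r - γ s‖ ≤ Hγ * (s - r) ^ α := by
        have := hγ s hsmem r hrmem
        rwa [abs_of_nonpos (by linarith), neg_sub] at this
      calc ‖((m⁻¹ • M) * exp (-((s - r) / m) • M)).mulVec (γ r - γ s)‖
          ≤ m⁻¹ * ‖M‖ * (K * Real.exp (-lam * ((s - r)/m))) * ‖γ r - γ s‖ :=
            stmt12_normA hK hlam hdecay hm hsr _
        _ ≤ m⁻¹ * ‖M‖ * (K * Real.exp (-lam * ((s - r)/m))) * (Hγ * (s - r) ^ α) := by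
            gcongr
        _ = (m⁻¹ * ‖M‖ * K * Hγ) * (Real.exp (-lam * ((s - r)/m)) * (s - r) ^ α) := by ring
        _ ≤ (m⁻¹ * ‖M‖ * K * Hγ) * ((2*m/lam) ^ α * Real.exp (-(lam/(2*m)*(s - r)))) :=
            mul_le_mul_of_nonneg_left
              (stmt12_key_pointwise hm hlam hsr hα.1.le hα.2) (by positivity)
        _ = c0 * Real.exp (-(lam/(2*m)*(s - r))) := by rw [hc0]; ring
  -- combine
  rw [hzs]
  calc ‖(exp (-(s / m) • M)).mulVec (γ s)
        - ∫ r in (0:ℝ)..s, ((m⁻¹ • M) * exp (-((s - r) / m) • M)).mulVec (γ r - γ s)‖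
      ≤ K * Hγ * (2*m/lam) ^ α + c0 * (2*m/lam) := by
        refine (norm_sub_le _ _).trans ?_
        exact add_le_add hterm1 hterm2
    _ = K * Hγ * (2*m/lam) ^ α * (1 + ‖M‖ * (2/lam)) := by
        rw [hc0]; field_simp
    _ = (K * Hγ * (2/lam) ^ α * (1 + ‖M‖ * (2/lam))) * m ^ α := by
        rw [show (2*m/lam) = m * (2/lam) by ring,
          Real.mul_rpow hm.le (by positivity)]
        ring

end Core2

section Core3

variable {n : ℕ} {M : Matrix (Fin n) (Fin n) ℝ} {K lam T α Hγ : ℝ}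
  {γ : ℝ → (Fin n → ℝ)}

lemma stmt12_zdiff (hT : 0 < T) (hα : α ∈ Ioc (0:ℝ) 1)
    (hγ : ∀ s ∈ Icc (0:ℝ) T, ∀ t ∈ Icc (0:ℝ) T, ‖γ t - γ s‖ ≤ Hγ * |t - s| ^ α)
    {m : ℝ} (hm : 0 < m) {z : ℝ → (Fin n → ℝ)}
    (hz : ∀ t ∈ Icc (0:ℝ) T,
      z t = γ t - ∫ r in (0:ℝ)..t, ((m⁻¹ • M) * exp (-((t - r) / m) • M)).mulVec (γ r))
    {s t : ℝ} (hs : s ∈ Icc (0:ℝ) T) (ht : t ∈ Icc (0:ℝ) T) :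
    z t - z s = (γ t - γ s)
      - (∫ r in s..t, ((m⁻¹ • M) * exp (-((t - r) / m) • M)).mulVec (γ r - γ s))
      + (exp (-((t - s) / m) • M) - 1).mulVec (z s) := by
  have hγc : ContinuousOn γ (Icc 0 T) := stmt12_gamma_contOn hα hγ
  have h0mem : (0:ℝ) ∈ Icc (0:ℝ) T := left_mem_Icc.2 hT.le
  have hγcs : ContinuousOn (fun r => γ r - γ s) (Icc 0 T) := hγc.sub continuousOn_const
  have hint_t0s : IntervalIntegrable
      (fun r => ((m⁻¹ • M) * exp (-((t - r) / m) • M)).mulVec (γ r))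
      MeasureTheory.volume 0 s := stmt12_integrable hm hT t hγc h0mem hs
  have hint_tst : IntervalIntegrable
      (fun r => ((m⁻¹ • M) * exp (-((t - r) / m) • M)).mulVec (γ r))
      MeasureTheory.volume s t := stmt12_integrable hm hT t hγc hs ht
  have hint_s0s : IntervalIntegrable
      (fun r => ((m⁻¹ • M) * exp (-((s - r) / m) • M)).mulVec (γ r))
      MeasureTheory.volume 0 s := stmt12_integrable hm hT s hγc h0mem hs
  have hint_d : IntervalIntegrable
      (fun r => ((m⁻¹ • M) * exp (-((t - r) / m) • M)).mulVec (γ r - γ s))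
      MeasureTheory.volume s t := stmt12_integrable hm hT t hγcs hs ht
  have hint_c : IntervalIntegrable
      (fun r => ((m⁻¹ • M) * exp (-((t - r) / m) • M)).mulVec (γ s))
      MeasureTheory.volume s t := stmt12_integrable hm hT t continuousOn_const hs ht
  have hintA : @IntervalIntegrable _ _ NormedAddGroup.toENormedAddMonoid (fun r => (m⁻¹ • M) * exp (-((t - r) / m) • M))
      MeasureTheory.volume s t := (stmt12_cont_matrixpart M m t).intervalIntegrable s t
  have hsplit : (∫ r in (0:ℝ)..t, ((m⁻¹ • M) * exp (-((t - r) / m) • M)).mulVec (γ r))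
      = (∫ r in (0:ℝ)..s, ((m⁻¹ • M) * exp (-((t - r) / m) • M)).mulVec (γ r))
        + ∫ r in s..t, ((m⁻¹ • M) * exp (-((t - r) / m) • M)).mulVec (γ r) :=
    (intervalIntegral.integral_add_adjacent_intervals hint_t0s hint_tst).symm
  have h1 : (∫ r in (0:ℝ)..s, ((m⁻¹ • M) * exp (-((t - r) / m) • M)).mulVec (γ r))
      = (exp (-((t - s) / m) • M)).mulVec
          (∫ r in (0:ℝ)..s, ((m⁻¹ • M) * exp (-((s - r) / m) • M)).mulVec (γ r)) := by
    rw [stmt12_mulVec_integral_comm _ hint_s0s]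
    congr 1
    funext r
    rw [stmt12_exp_split M hm r s t, ← Matrix.mulVec_mulVec]
  have h2 : (∫ r in (0:ℝ)..s, ((m⁻¹ • M) * exp (-((s - r) / m) • M)).mulVec (γ r))
      = γ s - z s := by
    rw [hz s hs]; abel
  have h3 : (∫ r in s..t, ((m⁻¹ • M) * exp (-((t - r) / m) • M)).mulVec (γ r))
      = (∫ r in s..t, ((m⁻¹ • M) * exp (-((t - r) / m) • M)).mulVec (γ r - γ s))
        + ((1 : Matrix (Fin n) (Fin n) ℝ) - exp (-((t - s) / m) • M)).mulVec (γ s) := by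
    rw [← stmt12_ftc_exp M hm t s, ← stmt12_integral_mulVec_comm (γ s) hintA,
      ← intervalIntegral.integral_add hint_d hint_c]
    congr 1
    funext r
    rw [Matrix.mulVec_sub]
    abel
  rw [hz t ht, hsplit, h1, h2, h3, Matrix.mulVec_sub, Matrix.sub_mulVec, Matrix.sub_mulVec,
    Matrix.one_mulVec, Matrix.one_mulVec]
  abel

end Core3

/-- With `z` as in Statement 11 (variation-of-constants solution of
`dz = -(M/m) z dt + dγ`, `z(0)=0`, encoded via integration by parts using `γ(0)=0`),
for each `β < α` the `β`-Hölder seminorm of `z` on `[0,T]` tends to `0` as `m → 0`. -/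
theorem stmt12 (n : ℕ) (M : Matrix (Fin n) (Fin n) ℝ) (K lam : ℝ)
    (hK : 0 < K) (hlam : 0 < lam)
    (hdecay : ∀ τ : ℝ, 0 ≤ τ → ‖exp (-τ • M)‖ ≤ K * Real.exp (-lam * τ))
    (T : ℝ) (hT : 0 < T) (α : ℝ) (hα : α ∈ Ioc (0:ℝ) 1)
    (γ : ℝ → (Fin n → ℝ)) (hγ0 : γ 0 = 0) (Hγ : ℝ)
    (hγ : ∀ s ∈ Icc (0:ℝ) T, ∀ t ∈ Icc (0:ℝ) T, ‖γ t - γ s‖ ≤ Hγ * |t - s| ^ α) :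
    ∀ β : ℝ, 0 < β → β < α → ∀ ε : ℝ, 0 < ε → ∃ m₀ : ℝ, 0 < m₀ ∧
      ∀ m : ℝ, 0 < m → m ≤ m₀ → ∀ z : ℝ → (Fin n → ℝ),
        (∀ t ∈ Icc (0:ℝ) T,
          z t = γ t - ∫ r in (0:ℝ)..t, ((m⁻¹ • M) * exp (-((t - r) / m) • M)).mulVec (γ r)) →
        ∀ s ∈ Icc (0:ℝ) T, ∀ t ∈ Icc (0:ℝ) T, s ≠ t →
          ‖z t - z s‖ ≤ ε * |t - s| ^ β := by
  intro β hβ hβα ε hε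
  have hHγ : 0 ≤ Hγ := stmt12_Hγ_nonneg hT hα hγ0 hγ
  set C : ℝ := K * Hγ * (2/lam) ^ α * (1 + ‖M‖ * (2/lam)) with hCdef
  have hC : 0 ≤ C := by
    apply mul_nonneg (mul_nonneg (mul_nonneg hK.le hHγ) (Real.rpow_nonneg (by positivity) _))
    positivity
  set C₁ : ℝ := Hγ + K*‖M‖*Hγ/lam + K*‖M‖*C with hC₁def
  have hC₁ : 0 ≤ C₁ := by
    apply add_nonneg (add_nonneg hHγ (by positivity))
    exact mul_nonneg (by positivity) hC
  set Ct : ℝ := C₁ + 2*C with hCtdef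
  have hCt : 0 ≤ Ct := by linarith
  have hαβ : 0 < α - β := sub_pos.2 hβα
  refine ⟨min 1 ((ε/(Ct+1)) ^ (1/(α-β))),
    lt_min one_pos (Real.rpow_pos_of_pos (by positivity) _), ?_⟩
  intro m hm hmm₀ z hz s hsmem t htmem hst
  have hsup := stmt12_zsup hK hlam hdecay hT hα hγ0 hγ hm hz
  -- the main estimate for a < b
  have key : ∀ a b : ℝ, a ∈ Icc (0:ℝ) T → b ∈ Icc (0:ℝ) T → a < b →
      ‖z b - z a‖ ≤ Ct * (m ^ (α-β) * (b-a) ^ β) := by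
    intro a b ha hb hab
    have hd : 0 < b - a := sub_pos.2 hab
    rcases le_or_gt (b - a) m with hcase | hcase
    · -- small increment case
      have hdiff := stmt12_zdiff hT hα hγ hm hz ha hb
      have hA : ‖γ b - γ a‖ ≤ Hγ * (b-a) ^ α := by
        have := hγ a ha b hb
        rwa [abs_of_pos hd] at this
      -- integral term
      set c1 : ℝ := m⁻¹ * ‖M‖ * K * (Hγ * (b-a) ^ α) with hc1def
      have hc1 : 0 ≤ c1 := by
        apply mul_nonneg (by positivity)
        positivity
      have hgint : IntervalIntegrable (fun r => c1 * Real.exp (-(lam/m*(b - r))))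
          MeasureTheory.volume a b :=
        (continuous_const.mul (Real.continuous_exp.comp (by fun_prop))).intervalIntegrable a b
      have hB : ‖∫ r in a..b, ((m⁻¹ • M) * exp (-((b - r) / m) • M)).mulVec (γ r - γ a)‖
          ≤ K*‖M‖*Hγ/lam * (b-a) ^ α := by
        have hbnd := intervalIntegral.norm_integral_le_of_norm_le (μ := MeasureTheory.volume)
          (f := fun r => ((m⁻¹ • M) * exp (-((b - r) / m) • M)).mulVec (γ r - γ a))
          (g := fun r => c1 * Real.exp (-(lam/m*(b - r)))) hab.le ?_ hgint
        · refine hbnd.trans ?_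
          have hval : (∫ r in a..b, c1 * Real.exp (-(lam/m*(b - r))))
              = c1 * ((1 - Real.exp (-(lam/m*(b-a))))/(lam/m)) := by
            rw [intervalIntegral.integral_const_mul,
              stmt12_exp_integral_scalar (by positivity)]
          have hexp1 : Real.exp (-(lam/m*(b-a))) ≤ 1 :=
            Real.exp_le_one_iff.2 (neg_nonpos.2 (mul_nonneg (by positivity) hd.le))
          have hexp0 := Real.exp_pos (-(lam/m*(b-a)))
          rw [hval]
          have h1 : (1 - Real.exp (-(lam/m*(b-a))))/(lam/m) ≤ m/lam := by
            rw [div_le_iff₀ (by positivity)]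
            have h2 : (m/lam) * (lam/m) = 1 := by field_simp
            nlinarith
          calc c1 * ((1 - Real.exp (-(lam/m*(b-a))))/(lam/m))
              ≤ c1 * (m/lam) := mul_le_mul_of_nonneg_left h1 hc1
            _ = K*‖M‖*Hγ/lam * (b-a) ^ α := by
                rw [hc1def]; field_simp
        · filter_upwards with r hr
          obtain ⟨hra, hrb⟩ := hr
          have hrmem : r ∈ Icc (0:ℝ) T := ⟨ha.1.trans hra.le, hrb.trans hb.2⟩
          have hbr : (0:ℝ) ≤ b - r := by linarith
          have hγr : ‖γ r - γ a‖ ≤ Hγ * (b-a) ^ α := by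
            have h1 := hγ a ha r hrmem
            have h2 : |r - a| ^ α ≤ (b - a) ^ α := by
              rw [abs_of_pos (by linarith : (0:ℝ) < r - a)]
              exact Real.rpow_le_rpow (by linarith) (by linarith) hα.1.le
            calc ‖γ r - γ a‖ ≤ Hγ * |r - a| ^ α := h1
              _ ≤ Hγ * (b - a) ^ α := mul_le_mul_of_nonneg_left h2 hHγ
          calc ‖((m⁻¹ • M) * exp (-((b - r) / m) • M)).mulVec (γ r - γ a)‖
              ≤ m⁻¹ * ‖M‖ * (K * Real.exp (-lam * ((b - r)/m))) * ‖γ r - γ a‖ :=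
                stmt12_normA hK hlam hdecay hm hbr _
            _ ≤ m⁻¹ * ‖M‖ * (K * Real.exp (-lam * ((b - r)/m))) * (Hγ * (b-a) ^ α) := by
                gcongr
            _ = c1 * Real.exp (-(lam/m*(b - r))) := by
                rw [hc1def, show -lam * ((b - r)/m) = -(lam/m*(b - r)) by ring]
                ring
      -- exponential difference term
      have hzam := hsup a ha
      have hCterm : ‖(exp (-((b - a) / m) • M) - 1).mulVec (z a)‖
          ≤ K*‖M‖*C * (b-a) ^ α := by
        have h1 : ‖exp (-((b - a) / m) • M) - 1‖ ≤ K * ‖M‖ * ((b-a)/m) :=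
          stmt12_exp_sub_one M hK hlam hdecay (by positivity)
        have hx1 : (b-a)/m ≤ 1 := (div_le_one hm).2 hcase
        have hx0 : 0 < (b-a)/m := by positivity
        have h2 : (b-a)/m ≤ ((b-a)/m) ^ α := by
          calc (b-a)/m = ((b-a)/m) ^ (1:ℝ) := (Real.rpow_one _).symm
            _ ≤ ((b-a)/m) ^ α := Real.rpow_le_rpow_of_exponent_ge hx0 hx1 hα.2
        have h3 : ((b-a)/m) ^ α * m ^ α = (b-a) ^ α := by
          rw [← Real.mul_rpow (by positivity) hm.le, div_mul_cancel₀ _ hm.ne']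
        calc ‖(exp (-((b - a) / m) • M) - 1).mulVec (z a)‖
            ≤ ‖exp (-((b - a) / m) • M) - 1‖ * ‖z a‖ := Matrix.linfty_opNorm_mulVec _ _
          _ ≤ (K * ‖M‖ * ((b-a)/m)) * (C * m ^ α) := by
              apply mul_le_mul h1 hzam (norm_nonneg _) (by positivity)
          _ = (K * ‖M‖ * C) * ((b-a)/m * m ^ α) := by ring
          _ ≤ (K * ‖M‖ * C) * (((b-a)/m) ^ α * m ^ α) := by
              apply mul_le_mul_of_nonneg_left _ (mul_nonneg (by positivity) hC)
              exact mul_le_mul_of_nonneg_right h2 (by positivity)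
          _ = K*‖M‖*C * (b-a) ^ α := by rw [h3]
      -- combine
      have hsum : ‖z b - z a‖ ≤ C₁ * (b-a) ^ α := by
        rw [hdiff]
        calc ‖(γ b - γ a)
              - (∫ r in a..b, ((m⁻¹ • M) * exp (-((b - r) / m) • M)).mulVec (γ r - γ a))
              + (exp (-((b - a) / m) • M) - 1).mulVec (z a)‖
            ≤ ‖(γ b - γ a)
              - (∫ r in a..b, ((m⁻¹ • M) * exp (-((b - r) / m) • M)).mulVec (γ r - γ a))‖
              + ‖(exp (-((b - a) / m) • M) - 1).mulVec (z a)‖ := norm_add_le _ _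
          _ ≤ (‖γ b - γ a‖
              + ‖∫ r in a..b, ((m⁻¹ • M) * exp (-((b - r) / m) • M)).mulVec (γ r - γ a)‖)
              + ‖(exp (-((b - a) / m) • M) - 1).mulVec (z a)‖ := by
              gcongr
              exact norm_sub_le _ _
          _ ≤ (Hγ * (b-a) ^ α + K*‖M‖*Hγ/lam * (b-a) ^ α) + K*‖M‖*C * (b-a) ^ α := by
              exact add_le_add (add_le_add hA hB) hCterm
          _ = C₁ * (b-a) ^ α := by rw [hC₁def]; ring
      have hsplit : (b-a) ^ α = (b-a) ^ (α-β) * (b-a) ^ β := by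
        rw [← Real.rpow_add hd]; congr 1; ring
      have hmono : (b-a) ^ (α-β) ≤ m ^ (α-β) :=
        Real.rpow_le_rpow hd.le hcase hαβ.le
      calc ‖z b - z a‖ ≤ C₁ * (b-a) ^ α := hsum
        _ = C₁ * ((b-a) ^ (α-β) * (b-a) ^ β) := by rw [← hsplit]
        _ ≤ C₁ * (m ^ (α-β) * (b-a) ^ β) := by
            apply mul_le_mul_of_nonneg_left _ hC₁
            exact mul_le_mul_of_nonneg_right hmono (Real.rpow_nonneg hd.le β)
        _ ≤ Ct * (m ^ (α-β) * (b-a) ^ β) := by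
            apply mul_le_mul_of_nonneg_right _ (by positivity)
            linarith
    · -- large increment case
      have hmb : m ^ β ≤ (b-a) ^ β := Real.rpow_le_rpow hm.le hcase.le hβ.le
      calc ‖z b - z a‖ ≤ ‖z b‖ + ‖z a‖ := norm_sub_le _ _
        _ ≤ C * m ^ α + C * m ^ α := add_le_add (hsup b hb) (hsup a ha)
        _ = 2*C * m ^ α := by ring
        _ = 2*C * (m ^ (α-β) * m ^ β) := by
            rw [← Real.rpow_add hm]; congr 2; ring
        _ ≤ 2*C * (m ^ (α-β) * (b-a) ^ β) := by
            apply mul_le_mul_of_nonneg_left _ (by positivity)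
            exact mul_le_mul_of_nonneg_left hmb (Real.rpow_nonneg hm.le _)
        _ ≤ Ct * (m ^ (α-β) * (b-a) ^ β) := by
            apply mul_le_mul_of_nonneg_right _ (by positivity)
            linarith
  -- from m ≤ m₀ deduce the final smallness
  have hfin : Ct * m ^ (α-β) ≤ ε := by
    have hm2 : m ≤ (ε/(Ct+1)) ^ (1/(α-β)) := hmm₀.trans (min_le_right _ _)
    have h3 : m ^ (α-β) ≤ ((ε/(Ct+1)) ^ (1/(α-β))) ^ (α-β) :=
      Real.rpow_le_rpow hm.le hm2 hαβ.le
    rw [← Real.rpow_mul (div_nonneg hε.le (by linarith)), one_div_mul_cancel hαβ.ne',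
      Real.rpow_one] at h3
    calc Ct * m ^ (α-β) ≤ Ct * (ε/(Ct+1)) := mul_le_mul_of_nonneg_left h3 hCt
      _ ≤ ε := by
          rw [div_eq_mul_inv]
          have h4 : 0 < Ct + 1 := by linarith
          have h5 : 0 < (Ct + 1)⁻¹ := inv_pos.2 h4
          have h6 : (Ct + 1) * (Ct + 1)⁻¹ = 1 := mul_inv_cancel₀ h4.ne'
          nlinarith
  rcases lt_or_gt_of_ne hst with h | h
  · rw [abs_of_pos (sub_pos.2 h)]
    calc ‖z t - z s‖ ≤ Ct * (m ^ (α-β) * (t-s) ^ β) := key s t hsmem htmem h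
      _ = (Ct * m ^ (α-β)) * (t-s) ^ β := by ring
      _ ≤ ε * (t-s) ^ β := mul_le_mul_of_nonneg_right hfin (Real.rpow_nonneg (by linarith) β)
  · rw [norm_sub_rev, show |t - s| = s - t by rw [abs_of_neg (by linarith : t - s < 0)]; ring]
    calc ‖z s - z t‖ ≤ Ct * (m ^ (α-β) * (s-t) ^ β) := key t s htmem hsmem h
      _ = (Ct * m ^ (α-β)) * (s-t) ^ β := by ring
      _ ≤ ε * (s-t) ^ β := mul_le_mul_of_nonneg_right hfin (Real.rpow_nonneg (by linarith) β)
end
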